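/- arXiv:1303.2878 — 8 statements merged into one kernel-verified Lean document; each statement's English description precedes it below -/
import Mathlib

section
/- Let m ≥ 2 and let a_1,…,a_m be positive integers with gcd(a_1,…,a_m) = 1, and set d_i = gcd(a_1,…,a_i). Then every integer n with n > −a_1 + Σ_{i=2}^m a_i(d_{i−1}/d_i − 1) can be written as n = a_1x_1 + ⋯ + a_mx_m with nonnegative integers x_1,…,x_m (Brauer's upper bound for the Frobenius number). -/
/-- `dseq a i = gcd(a_1, …, a_i)`. -/
def dseq (a : ℕ → ℕ) (i : ℕ) : ℕ := (Finset.Icc 1 i).gcd a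

lemma brauer_key : ∀ (m : ℕ), 1 ≤ m → ∀ (a : ℕ → ℕ),
    (∀ i, 1 ≤ i → i ≤ m → 0 < a i) →
    (Finset.Icc 1 m).gcd a = 1 →
    ∀ n : ℤ, -(a 1 : ℤ) + ∑ i ∈ Finset.Icc 2 m,
        (a i : ℤ) * (((dseq a (i - 1) / dseq a i : ℕ) : ℤ) - 1) < n →
    ∃ x : ℕ → ℕ, n = ∑ i ∈ Finset.Icc 1 m, (a i : ℤ) * (x i : ℤ) := by
  intro m hm1
  induction m, hm1 using Nat.le_induction with
  | base =>
      intro a hpos hgcd n hn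
      have ha1 : a 1 = 1 := by simpa using hgcd
      have hn0 : 0 ≤ n := by
        simp [ha1] at hn
        omega
      refine ⟨fun _ => n.toNat, ?_⟩
      simp [ha1, Int.toNat_of_nonneg hn0]
  | succ m hm ih =>
      intro a hpos hgcd n hn
      set d : ℕ := (Finset.Icc 1 m).gcd a with hd_def
      have hmem : ∀ i, 1 ≤ i → i ≤ m → i ∈ Finset.Icc 1 m := by
        intro i h1 h2; simp [Finset.mem_Icc]; omega
      have hdvd : ∀ i, 1 ≤ i → i ≤ m → d ∣ a i := fun i h1 h2 =>
        Finset.gcd_dvd (hmem i h1 h2)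
      have hdpos : 0 < d := by
        rcases Nat.eq_zero_or_pos d with h | h
        · have := hdvd 1 le_rfl hm
          rw [h] at this
          have := Nat.eq_zero_of_zero_dvd this
          have := hpos 1 le_rfl (by omega)
          omega
        · exact h
      have hinsert : Finset.Icc 1 (m + 1) = insert (m + 1) (Finset.Icc 1 m) := by
        ext i; simp [Finset.mem_Icc, Finset.mem_insert]; omega
      have hcop : Nat.Coprime (a (m + 1)) d := by
        have := hgcd
        rw [hinsert, Finset.gcd_insert] at this
        exact this
      haveI : NeZero d := ⟨hdpos.ne'⟩
      set u : (ZMod d)ˣ := ZMod.unitOfCoprime (a (m + 1)) hcop with hu_def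
      set xv : ℕ := ((n : ZMod d) * (↑u⁻¹ : ZMod d)).val with hxv_def
      have hxv_lt : xv < d := ZMod.val_lt _
      have hudvd : (d : ℤ) ∣ (n - (xv : ℤ) * (a (m + 1) : ℤ)) := by
        rw [← ZMod.intCast_zmod_eq_zero_iff_dvd]
        push_cast
        rw [hxv_def]
        rw [ZMod.natCast_val, ZMod.cast_id]
        have hu : ((u : ZMod d)) = (a (m + 1) : ZMod d) := rfl
        rw [← hu]
        rw [mul_assoc, Units.inv_mul]
        ring
      obtain ⟨n', hn'⟩ := hudvd
      set b : ℕ → ℕ := fun i => a i / d with hb_def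
      have hab : ∀ i, 1 ≤ i → i ≤ m → a i = d * b i := fun i h1 h2 =>
        (Nat.mul_div_cancel' (hdvd i h1 h2)).symm
      -- gcds of b
      have hgcd_scale : ∀ k, 1 ≤ k → k ≤ m →
          (Finset.Icc 1 k).gcd a = d * (Finset.Icc 1 k).gcd b := by
        intro k h1 h2
        have hcongr : (Finset.Icc 1 k).gcd a = (Finset.Icc 1 k).gcd (fun i => d * b i) := by
          apply Finset.gcd_congr rfl
          intro i hi
          simp [Finset.mem_Icc] at hi
          exact hab i hi.1 (le_trans hi.2 h2)
        rw [hcongr, Finset.gcd_mul_left]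
        simp
      have hgcdb : (Finset.Icc 1 m).gcd b = 1 := by
        have h := hgcd_scale m hm le_rfl
        exact Nat.eq_of_mul_eq_mul_left hdpos (by rw [mul_one]; exact h.symm)
      have hbpos : ∀ i, 1 ≤ i → i ≤ m → 0 < b i := by
        intro i h1 h2
        have h3 := hpos i h1 (by omega)
        have h4 := hab i h1 h2
        rcases Nat.eq_zero_or_pos (b i) with h | h
        · rw [h, mul_zero] at h4; omega
        · exact h
      -- quotient equality
      have hq : ∀ i, 2 ≤ i → i ≤ m → dseq b (i - 1) / dseq b i = dseq a (i - 1) / dseq a i := by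
        intro i h2 hm'
        have e1 : dseq a (i - 1) = d * dseq b (i - 1) := hgcd_scale (i - 1) (by omega) (by omega)
        have e2 : dseq a i = d * dseq b i := hgcd_scale i (by omega) hm'
        rw [e1, e2, Nat.mul_div_mul_left _ _ hdpos]
      -- d_{m+1} = 1
      have hdm1 : dseq a (m + 1) = 1 := hgcd
      have hdm : dseq a m = d := rfl
      -- split the hypothesis sum
      have hsplit : ∑ i ∈ Finset.Icc 2 (m + 1),
          (a i : ℤ) * (((dseq a (i - 1) / dseq a i : ℕ) : ℤ) - 1)
          = (∑ i ∈ Finset.Icc 2 m, (a i : ℤ) * (((dseq a (i - 1) / dseq a i : ℕ) : ℤ) - 1))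
            + (a (m + 1) : ℤ) * ((d : ℤ) - 1) := by
        rw [Finset.sum_Icc_succ_top (by omega : 2 ≤ m + 1)]
        congr 1
        have : dseq a (m + 1 - 1) / dseq a (m + 1) = d := by
          simp [hdm1, hdm]
        rw [this]
      rw [hsplit] at hn
      -- the scaled bound
      have hbound_b : -(b 1 : ℤ) + ∑ i ∈ Finset.Icc 2 m,
          (b i : ℤ) * (((dseq b (i - 1) / dseq b i : ℕ) : ℤ) - 1) < n' := by
        have key : (d : ℤ) * (-(b 1 : ℤ) + ∑ i ∈ Finset.Icc 2 m,
            (b i : ℤ) * (((dseq b (i - 1) / dseq b i : ℕ) : ℤ) - 1))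
            = -(a 1 : ℤ) + ∑ i ∈ Finset.Icc 2 m,
            (a i : ℤ) * (((dseq a (i - 1) / dseq a i : ℕ) : ℤ) - 1) := by
          rw [mul_add, Finset.mul_sum]
          congr 1
          · have := hab 1 le_rfl hm
            rw [this]; push_cast; ring
          · apply Finset.sum_congr rfl
            intro i hi
            simp [Finset.mem_Icc] at hi
            rw [hq i hi.1 hi.2, hab i (by omega) hi.2]
            push_cast; ring
        have hxle : (xv : ℤ) * (a (m + 1) : ℤ) ≤ ((d : ℤ) - 1) * (a (m + 1) : ℤ) := by
          have h1 : (xv : ℤ) ≤ (d : ℤ) - 1 := by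
            have := hxv_lt; omega
          have h2 : (0 : ℤ) ≤ (a (m + 1) : ℤ) := by positivity
          exact mul_le_mul_of_nonneg_right h1 h2
        have hdn' : (d : ℤ) * n' = n - (xv : ℤ) * (a (m + 1) : ℤ) := hn'.symm
        have : (d : ℤ) * (-(b 1 : ℤ) + ∑ i ∈ Finset.Icc 2 m,
            (b i : ℤ) * (((dseq b (i - 1) / dseq b i : ℕ) : ℤ) - 1)) < (d : ℤ) * n' := by
          rw [key, hdn']
          have hcomm : (a (m + 1) : ℤ) * ((d : ℤ) - 1) = ((d : ℤ) - 1) * (a (m + 1) : ℤ) :=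
            mul_comm _ _
          linarith
        exact lt_of_mul_lt_mul_left this (by positivity)
      obtain ⟨x', hx'⟩ := ih b hbpos hgcdb n' hbound_b
      refine ⟨fun i => if i = m + 1 then xv else x' i, ?_⟩
      rw [Finset.sum_Icc_succ_top (by omega : 1 ≤ m + 1)]
      have hrest : ∑ i ∈ Finset.Icc 1 m,
          (a i : ℤ) * ((if i = m + 1 then xv else x' i : ℕ) : ℤ)
          = (d : ℤ) * n' := by
        rw [hx', Finset.mul_sum]
        apply Finset.sum_congr rfl
        intro i hi
        simp [Finset.mem_Icc] at hi
        rw [if_neg (by omega), hab i hi.1 hi.2]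
        push_cast; ring
      rw [hrest]
      simp only [↓reduceIte]
      linarith [hn', mul_comm (xv : ℤ) ((a (m + 1)) : ℤ)]

/-- **Brauer's upper bound for the Frobenius number.**
Let `m ≥ 2` and `a_1, …, a_m` positive integers with `gcd(a_1,…,a_m) = 1`, and
`d_i = gcd(a_1,…,a_i)`.  Every integer
`n > -a_1 + ∑_{i=2}^m a_i (d_{i-1}/d_i - 1)` can be written as
`n = a_1 x_1 + ⋯ + a_m x_m` with nonnegative integers `x_1, …, x_m`. -/
theorem brauer_upper_bound
    (m : ℕ) (hm : 2 ≤ m) (a : ℕ → ℕ)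
    (hpos : ∀ i, 1 ≤ i → i ≤ m → 0 < a i)
    (hgcd : (Finset.Icc 1 m).gcd a = 1)
    (n : ℤ)
    (hn : -(a 1 : ℤ) + ∑ i ∈ Finset.Icc 2 m,
        (a i : ℤ) * (((dseq a (i - 1) / dseq a i : ℕ) : ℤ) - 1) < n) :
    ∃ x : ℕ → ℕ, n = ∑ i ∈ Finset.Icc 1 m, (a i : ℤ) * (x i : ℤ) := by
  exact brauer_key m (by omega) a hpos hgcd n hn
end

section
/- Let m ≥ 2 and let a_1,…,a_m be positive integers with gcd(a_1,…,a_m) = 1 satisfying the telescopic condition, and set N = −a_1 + Σ_{i=2}^m a_i(d_{i−1}/d_i − 1). If N ≥ 0, then N cannot be written as a_1x_1 + ⋯ + a_mx_m with nonnegative integers x_1,…,x_m; consequently N is the greatest integer that is not representable (the Frobenius number equals Brauer's bound). -/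
/-- The telescopic condition:
`a_i/d_i ∈ (a_1/d_{i-1})ℤ_{≥0} + ⋯ + (a_{i-1}/d_{i-1})ℤ_{≥0}` for `2 ≤ i ≤ m`. -/
def Telescopic (m : ℕ) (a : ℕ → ℕ) : Prop :=
  ∀ i, 2 ≤ i → i ≤ m →
    ∃ k : ℕ → ℕ,
      a i / dseq a i = ∑ j ∈ Finset.Icc 1 (i - 1), (a j / dseq a (i - 1)) * k j

lemma dseq_step' (a : ℕ → ℕ) (i : ℕ) (hi : 1 ≤ i) :
    dseq a i = Nat.gcd (a i) (dseq a (i-1)) := by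
  unfold dseq
  rw [show Finset.Icc 1 i = insert i (Finset.Icc 1 (i-1)) by
    ext j; simp [Finset.mem_Icc, Finset.mem_insert]; omega]
  rw [Finset.gcd_insert]; rfl

lemma dseq_dvd' (a : ℕ → ℕ) (i j : ℕ) (h1 : 1 ≤ j) (h2 : j ≤ i) : dseq a i ∣ a j :=
  Finset.gcd_dvd (by simp [Finset.mem_Icc]; omega)

lemma dseq_succ_dvd' (a : ℕ → ℕ) (i : ℕ) (hi : 1 ≤ i) : dseq a i ∣ dseq a (i-1) := by
  rw [dseq_step' a i hi]; exact Nat.gcd_dvd_right _ _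

lemma dseq_pos' (a : ℕ → ℕ) (i : ℕ) (hi : 1 ≤ i) (ha : 0 < a 1) : 0 < dseq a i :=
  Nat.pos_of_dvd_of_pos (dseq_dvd' a i 1 le_rfl hi) ha

lemma solve_step' (cc u : ℕ) (hcc : 0 < cc) (hco : Nat.Coprime u cc) (n : ℤ) :
    ∃ x : ℕ, x < cc ∧ (cc : ℤ) ∣ n - u * x := by
  haveI : NeZero cc := ⟨hcc.ne'⟩
  set v : ZMod cc := (u : ZMod cc)⁻¹ * (n : ZMod cc) with hv
  refine ⟨v.val, ZMod.val_lt v, ?_⟩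
  rw [← ZMod.intCast_zmod_eq_zero_iff_dvd]
  push_cast
  rw [ZMod.natCast_val, ZMod.cast_id]
  have hu : IsUnit (u : ZMod cc) := (ZMod.isUnit_iff_coprime u cc).2 hco
  rw [hv, ← mul_assoc, ZMod.mul_inv_of_unit _ hu, one_mul, sub_self]

lemma exists_canonical' (m : ℕ) (a : ℕ → ℕ) (ha1 : 0 < a 1) :
    ∀ i, 1 ≤ i → i ≤ m → ∀ n : ℤ, (dseq a i : ℤ) ∣ n →
      ∃ (x1 : ℤ) (x : ℕ → ℕ),
        n = (a 1 : ℤ) * x1 + ∑ j ∈ Finset.Icc 2 i, (a j : ℤ) * x j ∧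
        ∀ j, 2 ≤ j → j ≤ i → x j < dseq a (j-1) / dseq a j := by
  intro i hi
  induction i, hi using Nat.le_induction with
  | base =>
    intro _ n hdvd
    have h1 : dseq a 1 = a 1 := by simp [dseq]
    rw [h1] at hdvd
    obtain ⟨x1, hx1⟩ := hdvd
    exact ⟨x1, fun _ => 0, by simpa using hx1, by omega⟩
  | succ i hi ih =>
    intro him n hdvd
    have hii : i ≤ m := by omega
    set g := dseq a (i+1) with hg
    set D := dseq a i with hD
    have hstep : g = Nat.gcd (a (i+1)) D := by
      rw [hg, dseq_step' a (i+1) (by omega)]; simp [hD]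
    have hgD : g ∣ D := hstep ▸ Nat.gcd_dvd_right _ _
    have hga : g ∣ a (i+1) := hstep ▸ Nat.gcd_dvd_left _ _
    have hgpos : 0 < g := dseq_pos' a (i+1) (by omega) ha1
    have hDpos : 0 < D := dseq_pos' a i (by omega) ha1
    set u := a (i+1) / g with hu
    set cc := D / g with hcc
    have hccpos : 0 < cc := Nat.div_pos (Nat.le_of_dvd hDpos hgD) hgpos
    have hco : Nat.Coprime u cc := by
      have := Nat.coprime_div_gcd_div_gcd (m := a (i+1)) (n := D) (hstep ▸ hgpos)
      rwa [← hstep] at this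
    obtain ⟨n', rfl⟩ := hdvd
    obtain ⟨x, hxlt, hxdvd⟩ := solve_step' cc u hccpos hco n'
    have haeq : (a (i+1) : ℤ) = (g : ℤ) * u := by
      rw [hu]; exact_mod_cast (Nat.mul_div_cancel' hga).symm
    have hDeq : (D : ℤ) = (g : ℤ) * cc := by
      rw [hcc]; exact_mod_cast (Nat.mul_div_cancel' hgD).symm
    have hdvd2 : (D : ℤ) ∣ (g : ℤ) * n' - (a (i+1) : ℤ) * x := by
      rw [hDeq, haeq]
      have : (g:ℤ) * n' - (g:ℤ) * u * x = (g:ℤ) * (n' - u * x) := by ring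
      rw [this]
      exact mul_dvd_mul_left _ hxdvd
    obtain ⟨x1, x', heq, hbd⟩ := ih hii _ hdvd2
    refine ⟨x1, Function.update x' (i+1) x, ?_, ?_⟩
    · rw [show Finset.Icc 2 (i+1) = insert (i+1) (Finset.Icc 2 i) by
        ext j; simp [Finset.mem_Icc, Finset.mem_insert]; omega]
      rw [Finset.sum_insert (by simp)]
      rw [Function.update_self]
      rw [Finset.sum_congr rfl (fun j hj => by
        rw [Function.update_of_ne (by simp at hj; omega)])]
      rw [show (g:ℤ) * n' = ((g:ℤ) * n' - (a (i+1) : ℤ) * x) + (a (i+1):ℤ) * x by ring, heq]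
      ring
    · intro j hj2 hj
      rcases eq_or_lt_of_le hj with h | h
      · subst h
        rw [Function.update_self]
        simpa using hxlt
      · rw [Function.update_of_ne (by omega)]
        exact hbd j hj2 (by omega)

lemma telescopic_mul' (m : ℕ) (a : ℕ → ℕ) (htel : Telescopic m a) (ha1 : 0 < a 1)
    (i : ℕ) (h2 : 2 ≤ i) (hm : i ≤ m) :
    ∃ k : ℕ → ℕ, (dseq a (i-1) / dseq a i) * a i = ∑ j ∈ Finset.Icc 1 (i-1), a j * k j := by
  obtain ⟨k, hk⟩ := htel i h2 hm
  refine ⟨k, ?_⟩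
  have hgpos : 0 < dseq a i := dseq_pos' a i (by omega) ha1
  have hga : dseq a i ∣ a i := dseq_dvd' a i i (by omega) le_rfl
  have hgD : dseq a i ∣ dseq a (i-1) := dseq_succ_dvd' a i (by omega)
  have key : dseq a (i-1) * (a i / dseq a i) = (dseq a (i-1) / dseq a i) * a i := by
    obtain ⟨u, hu⟩ := hga
    obtain ⟨cc, hcc⟩ := hgD
    rw [hu, hcc, Nat.mul_div_cancel_left _ hgpos, Nat.mul_div_cancel_left _ hgpos]
    ring
  rw [← key, hk, Finset.mul_sum]
  refine Finset.sum_congr rfl fun j hj => ?_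
  simp only [Finset.mem_Icc] at hj
  rw [← mul_assoc, Nat.mul_div_cancel' (dseq_dvd' a (i-1) j hj.1 hj.2)]

lemma reduce' (m : ℕ) (a : ℕ → ℕ) (htel : Telescopic m a) (ha1 : 0 < a 1) :
    ∀ i, 1 ≤ i → i ≤ m → ∀ y : ℕ → ℕ, ∃ x : ℕ → ℕ,
      ∑ j ∈ Finset.Icc 1 i, a j * y j = ∑ j ∈ Finset.Icc 1 i, a j * x j ∧
      ∀ j, 2 ≤ j → j ≤ i → x j < dseq a (j-1) / dseq a j := by
  intro i hi
  induction i, hi using Nat.le_induction with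
  | base => exact fun _ y => ⟨y, rfl, by omega⟩
  | succ i hi ih =>
    intro him y
    have hii : i ≤ m := by omega
    obtain ⟨k, hk⟩ := telescopic_mul' m a htel ha1 (i+1) (by omega) him
    simp only [Nat.add_sub_cancel] at hk
    set cc := dseq a i / dseq a (i+1) with hcc
    have hccpos : 0 < cc := by
      have hgpos : 0 < dseq a (i+1) := dseq_pos' a (i+1) (by omega) ha1
      have hDpos : 0 < dseq a i := dseq_pos' a i (by omega) ha1
      have hgD : dseq a (i+1) ∣ dseq a i := by
        have := dseq_succ_dvd' a (i+1) (by omega); simpa using this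
      exact Nat.div_pos (Nat.le_of_dvd hDpos hgD) hgpos
    set q := y (i+1) / cc with hq
    set r := y (i+1) % cc with hr
    have hy : y (i+1) = cc * q + r := (Nat.div_add_mod _ _).symm
    obtain ⟨x, hsum, hbd⟩ := ih hii (fun j => y j + q * k j)
    have hins : Finset.Icc 1 (i+1) = insert (i+1) (Finset.Icc 1 i) := by
      ext j; simp [Finset.mem_Icc, Finset.mem_insert]; omega
    refine ⟨Function.update x (i+1) r, ?_, ?_⟩
    · calc ∑ j ∈ Finset.Icc 1 (i+1), a j * y j
          = a (i+1) * y (i+1) + ∑ j ∈ Finset.Icc 1 i, a j * y j := by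
            rw [hins, Finset.sum_insert (by simp)]
        _ = a (i+1) * r + (∑ j ∈ Finset.Icc 1 i, a j * y j
              + q * ((dseq a i / dseq a (i+1)) * a (i+1))) := by rw [hy]; ring
        _ = a (i+1) * r + (∑ j ∈ Finset.Icc 1 i, a j * y j
              + q * ∑ j ∈ Finset.Icc 1 i, a j * k j) := by rw [hk]
        _ = a (i+1) * r + ∑ j ∈ Finset.Icc 1 i, a j * (y j + q * k j) := by
            rw [Finset.mul_sum, ← Finset.sum_add_distrib]
            congr 1
            exact Finset.sum_congr rfl fun j _ => by ring
        _ = a (i+1) * r + ∑ j ∈ Finset.Icc 1 i, a j * x j := by rw [hsum]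
        _ = ∑ j ∈ Finset.Icc 1 (i+1), a j * (Function.update x (i+1) r) j := by
            rw [hins, Finset.sum_insert (by simp), Function.update_self]
            congr 1
            exact Finset.sum_congr rfl fun j hj => by
              rw [Function.update_of_ne (by simp at hj; omega)]
    · intro j hj2 hj
      rcases eq_or_lt_of_le hj with h | h
      · subst h
        rw [Function.update_self]
        simp only [Nat.add_sub_cancel]
        exact hr ▸ Nat.mod_lt _ hccpos
      · rw [Function.update_of_ne (by omega)]
        exact hbd j hj2 (by omega)

lemma descent' (m : ℕ) (a : ℕ → ℕ) (ha1 : 0 < a 1) (x : ℕ → ℕ)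
    (hbd : ∀ j, 2 ≤ j → j ≤ m → x j < dseq a (j-1) / dseq a j) :
    ∀ i, i ≤ m → 1 ≤ i →
      (a 1 : ℤ) * (x 1 + 1) + ∑ j ∈ Finset.Icc 2 i,
        (a j : ℤ) * ((x j : ℤ) - (((dseq a (j-1) / dseq a j : ℕ) : ℤ) - 1)) = 0 → False := by
  intro i
  induction i with
  | zero => omega
  | succ i ih =>
    intro him h1 heq
    rcases Nat.eq_zero_or_pos i with hi0 | hi1
    · subst hi0
      simp only [show Finset.Icc 2 (0+1) = ∅ by rfl, Finset.sum_empty, add_zero] at heq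
      have h1 : (0:ℤ) < (a 1 : ℤ) := by exact_mod_cast ha1
      nlinarith [heq, h1, Int.natCast_nonneg (x 1)]
    · have hins : Finset.Icc 2 (i+1) = insert (i+1) (Finset.Icc 2 i) := by
        ext j; simp [Finset.mem_Icc, Finset.mem_insert]; omega
      rw [hins, Finset.sum_insert (by simp)] at heq
      set g := dseq a (i+1) with hg
      set D := dseq a i with hD
      have hstep : g = Nat.gcd (a (i+1)) D := by
        rw [hg, dseq_step' a (i+1) (by omega)]; simp [hD]
      have hgD : g ∣ D := hstep ▸ Nat.gcd_dvd_right _ _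
      have hga : g ∣ a (i+1) := hstep ▸ Nat.gcd_dvd_left _ _
      have hgpos : 0 < g := dseq_pos' a (i+1) (by omega) ha1
      have hDpos : 0 < D := dseq_pos' a i (by omega) ha1
      set cc := D / g with hcc
      have hccpos : 0 < cc := Nat.div_pos (Nat.le_of_dvd hDpos hgD) hgpos
      set u := a (i+1) / g with hu
      have hco : Nat.Coprime u cc := by
        have := Nat.coprime_div_gcd_div_gcd (m := a (i+1)) (n := D) (hstep ▸ hgpos)
        rwa [← hstep] at this
      have haeq : (a (i+1) : ℤ) = (g : ℤ) * u := by
        rw [hu]; exact_mod_cast (Nat.mul_div_cancel' hga).symm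
      have hDeq : (D : ℤ) = (g : ℤ) * cc := by
        rw [hcc]; exact_mod_cast (Nat.mul_div_cancel' hgD).symm
      have hTdvd : (D : ℤ) ∣ (a 1 : ℤ) * (x 1 + 1) + ∑ j ∈ Finset.Icc 2 i,
          (a j : ℤ) * ((x j : ℤ) - (((dseq a (j-1) / dseq a j : ℕ) : ℤ) - 1)) := by
        refine dvd_add ?_ (Finset.dvd_sum fun j hj => ?_)
        · exact Dvd.dvd.mul_right
            (Int.natCast_dvd_natCast.2 (dseq_dvd' a i 1 le_rfl (by omega))) _
        · simp only [Finset.mem_Icc] at hj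
          exact Dvd.dvd.mul_right
            (Int.natCast_dvd_natCast.2 (dseq_dvd' a i j (by omega) hj.2)) _
      set z : ℤ := (x (i+1) : ℤ) - (((dseq a ((i+1)-1) / dseq a (i+1) : ℕ) : ℤ) - 1) with hz
      have hzcc : z = (x (i+1) : ℤ) - ((cc : ℤ) - 1) := by
        rw [hz]; simp [hcc, hD, hg]
      have hdz : (D : ℤ) ∣ (a (i+1) : ℤ) * z := by
        have : (a (i+1) : ℤ) * z = -((a 1 : ℤ) * (x 1 + 1) + ∑ j ∈ Finset.Icc 2 i,
            (a j : ℤ) * ((x j : ℤ) - (((dseq a (j-1) / dseq a j : ℕ) : ℤ) - 1))) := by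
          linarith [heq]
        rw [this]
        exact dvd_neg.2 hTdvd
      have hccz : (cc : ℤ) ∣ u * z := by
        rw [hDeq, haeq] at hdz
        have h2 : (g : ℤ) * cc ∣ (g : ℤ) * (u * z) := by
          rw [show (g:ℤ) * (u*z) = (g:ℤ) * u * z by ring]; exact hdz
        exact (mul_dvd_mul_iff_left (by exact_mod_cast hgpos.ne' : (g:ℤ) ≠ 0)).mp h2
      have hcopz : IsCoprime (cc : ℤ) (u : ℤ) :=
        (Int.isCoprime_iff_gcd_eq_one.2 (by simpa using hco)).symm
      have hccz2 : (cc : ℤ) ∣ z := hcopz.dvd_of_dvd_mul_left hccz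
      have hxlt : (x (i+1) : ℤ) < cc := by
        have := hbd (i+1) (by omega) him
        simp only [Nat.add_sub_cancel, ← hcc, ← hD, ← hg] at this
        exact_mod_cast this
      have hz0 : z = 0 := by
        refine Int.eq_zero_of_abs_lt_dvd hccz2 ?_
        rw [hzcc, abs_lt]
        constructor <;> [linarith [Int.natCast_nonneg (x (i+1))]; linarith]
      apply ih (by omega) (by omega)
      rw [hz0, mul_zero, zero_add] at heq
      exact heq

/-- For a telescopic sequence the Frobenius number equals Brauer's bound:
`N = -a_1 + ∑_{i=2}^m a_i (d_{i-1}/d_i - 1)` is not representable (when `N ≥ 0`),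
and every integer greater than `N` is representable, so `N` is the greatest
non-representable integer. -/
theorem telescopic_frobenius_number
    (m : ℕ) (hm : 2 ≤ m) (a : ℕ → ℕ)
    (hpos : ∀ i, 1 ≤ i → i ≤ m → 0 < a i)
    (hgcd : (Finset.Icc 1 m).gcd a = 1)
    (htel : Telescopic m a)
    (N : ℤ)
    (hN : N = -(a 1 : ℤ) + ∑ i ∈ Finset.Icc 2 m,
        (a i : ℤ) * (((dseq a (i - 1) / dseq a i : ℕ) : ℤ) - 1))
    (hN0 : 0 ≤ N) :
    (¬ ∃ x : ℕ → ℕ, N = ∑ i ∈ Finset.Icc 1 m, (a i : ℤ) * (x i : ℤ)) ∧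
      (∀ n : ℤ, N < n → ∃ x : ℕ → ℕ, n = ∑ i ∈ Finset.Icc 1 m, (a i : ℤ) * (x i : ℤ)) := by
  have ha1 : 0 < a 1 := hpos 1 le_rfl (by omega)
  have ha1Z : (0:ℤ) < (a 1 : ℤ) := by exact_mod_cast ha1
  have hins1 : Finset.Icc 1 m = insert 1 (Finset.Icc 2 m) := by
    ext j; simp [Finset.mem_Icc, Finset.mem_insert]; omega
  constructor
  · rintro ⟨y, hy⟩
    obtain ⟨x, hsum, hbd⟩ := reduce' m a htel ha1 m (by omega) le_rfl y
    have hsumZ : ∑ j ∈ Finset.Icc 1 m, (a j : ℤ) * (y j : ℤ)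
        = ∑ j ∈ Finset.Icc 1 m, (a j : ℤ) * (x j : ℤ) := by
      have := congrArg (fun t : ℕ => (t : ℤ)) hsum
      push_cast at this
      exact this
    rw [hsumZ] at hy
    rw [hins1, Finset.sum_insert (by simp)] at hy
    have hsub : ∑ j ∈ Finset.Icc 2 m,
          (a j : ℤ) * ((x j : ℤ) - (((dseq a (j-1) / dseq a j : ℕ) : ℤ) - 1))
        = ∑ j ∈ Finset.Icc 2 m, (a j : ℤ) * (x j : ℤ)
          - ∑ j ∈ Finset.Icc 2 m, (a j : ℤ) * (((dseq a (j-1) / dseq a j : ℕ) : ℤ) - 1) := by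
      rw [← Finset.sum_sub_distrib]
      exact Finset.sum_congr rfl fun j _ => by ring
    refine descent' m a ha1 x hbd m le_rfl (by omega) ?_
    rw [hsub]
    have := hy
    rw [hN] at this
    linarith [this]
  · intro n hn
    have hdm : (dseq a m : ℤ) ∣ n := by
      have : dseq a m = 1 := hgcd
      rw [this]; exact one_dvd n
    obtain ⟨x1, x, heq, hbd⟩ := exists_canonical' m a ha1 m (by omega) le_rfl n hdm
    have hsumle : ∑ j ∈ Finset.Icc 2 m, (a j : ℤ) * (x j : ℤ)
        ≤ ∑ j ∈ Finset.Icc 2 m, (a j : ℤ) * (((dseq a (j-1) / dseq a j : ℕ) : ℤ) - 1) := by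
      refine Finset.sum_le_sum fun j hj => ?_
      simp only [Finset.mem_Icc] at hj
      have hb := hbd j hj.1 hj.2
      have : (x j : ℤ) ≤ ((dseq a (j-1) / dseq a j : ℕ) : ℤ) - 1 := by
        have : (x j : ℤ) < ((dseq a (j-1) / dseq a j : ℕ) : ℤ) := by exact_mod_cast hb
        omega
      exact mul_le_mul_of_nonneg_left this (Int.natCast_nonneg _)
    have hx1 : 0 ≤ x1 := by
      by_contra hneg
      push_neg at hneg
      have h1 : (a 1 : ℤ) * (x1 + 1) ≤ 0 :=
        mul_nonpos_of_nonneg_of_nonpos (le_of_lt ha1Z) (by omega)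
      have h2 : (a 1 : ℤ) * x1 = n - ∑ j ∈ Finset.Icc 2 m, (a j : ℤ) * (x j : ℤ) := by
        linarith [heq]
      have h3 : (a 1 : ℤ) * x1 > N - ∑ j ∈ Finset.Icc 2 m,
          (a j : ℤ) * (((dseq a (j-1) / dseq a j : ℕ) : ℤ) - 1) := by
        rw [h2]; linarith
      rw [hN] at h3
      have : (a 1 : ℤ) * (x1 + 1) > 0 := by
        have hNsum : ∑ i ∈ Finset.Icc 2 m,
            (a i : ℤ) * (((dseq a (i - 1) / dseq a i : ℕ) : ℤ) - 1)
          = ∑ j ∈ Finset.Icc 2 m, (a j : ℤ) * (((dseq a (j-1) / dseq a j : ℕ) : ℤ) - 1) := rfl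
        rw [hNsum] at h3
        nlinarith [h3]
      linarith
    refine ⟨Function.update x 1 x1.toNat, ?_⟩
    rw [hins1, Finset.sum_insert (by simp), Function.update_self,
      Int.toNat_of_nonneg hx1]
    rw [Finset.sum_congr rfl (fun j hj => by
      rw [Function.update_of_ne (by simp at hj; omega)])]
    exact heq
end

section
/- Let (a_1,…,a_m) be a telescopic sequence and, for 2 ≤ i ≤ m, let (l_{i1},…,l_{im}) be the unique element of B(A_m) with Σ_{j=1}^m a_j l_{ij} = a_i·d_{i−1}/d_i. Then l_{ij} = 0 for all j ≥ i. -/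
/-- Membership in `B(A_m)`: `0 ≤ l_i ≤ d_{i-1}/d_i - 1` for `2 ≤ i ≤ m`
(`l_1` is unrestricted). -/
def InB (m : ℕ) (a : ℕ → ℕ) (l : ℕ → ℕ) : Prop :=
  ∀ i, 2 ≤ i → i ≤ m → l i ≤ dseq a (i - 1) / dseq a i - 1

/-- If `(l_{i1},…,l_{im}) ∈ B(A_m)` represents `a_i · d_{i-1}/d_i`, i.e.
`∑_{j=1}^m a_j l_{ij} = a_i d_{i-1}/d_i`, then `l_{ij} = 0` for all `j ≥ i`. -/
theorem telescopic_representative_vanishes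
    (m : ℕ) (hm : 2 ≤ m) (a : ℕ → ℕ)
    (hpos : ∀ i, 1 ≤ i → i ≤ m → 0 < a i)
    (hgcd : (Finset.Icc 1 m).gcd a = 1)
    (htel : Telescopic m a)
    (i : ℕ) (hi2 : 2 ≤ i) (him : i ≤ m)
    (l : ℕ → ℕ) (hB : InB m a l)
    (hsum : ∑ j ∈ Finset.Icc 1 m, a j * l j = a i * (dseq a (i - 1) / dseq a i)) :
    ∀ j, i ≤ j → j ≤ m → l j = 0 := by
  -- basic facts about dseq
  have ddvd : ∀ n k, 1 ≤ k → k ≤ n → dseq a n ∣ a k := by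
    intro n k h1 h2
    exact Finset.gcd_dvd (Finset.mem_Icc.mpr ⟨h1, h2⟩)
  have dmono : ∀ j k, j ≤ k → dseq a k ∣ dseq a j := by
    intro j k hjk
    exact Finset.dvd_gcd fun x hx => by
      rcases Finset.mem_Icc.mp hx with ⟨h1, h2⟩
      exact ddvd k x h1 (h2.trans hjk)
  have dpos : ∀ n, 1 ≤ n → n ≤ m → 0 < dseq a n := by
    intro n h1 h2
    rcases Nat.eq_zero_or_pos (dseq a n) with h | h
    · have h0 := (Finset.gcd_eq_zero_iff.mp h) 1 (Finset.mem_Icc.mpr ⟨le_refl 1, h1⟩)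
      have := hpos 1 le_rfl (le_trans h1 h2)
      omega
    · exact h
  have dstep : ∀ n, 1 ≤ n → dseq a n = Nat.gcd (a n) (dseq a (n - 1)) := by
    intro n h1
    have : Finset.Icc 1 n = insert n (Finset.Icc 1 (n - 1)) := by
      ext x; simp only [Finset.mem_Icc, Finset.mem_insert]; omega
    rw [dseq, this, Finset.gcd_insert]; rfl
  -- the key step
  have key : ∀ n, i ≤ n → n ≤ m → (∀ j', n < j' → j' ≤ m → l j' = 0) → l n = 0 := by
    intro n hin hnm hz
    have hn2 : 2 ≤ n := le_trans hi2 hin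
    have hn1 : 1 ≤ n - 1 := by omega
    have hn1m : n - 1 ≤ m := by omega
    have Dpos : 0 < dseq a (n - 1) := dpos (n - 1) hn1 hn1m
    have gpos : 0 < dseq a n := dpos n (by omega) hnm
    set D := dseq a (n - 1) with hD
    set g := dseq a n with hg
    have hgD : g ∣ D := dmono (n - 1) n (by omega)
    -- split the sum
    have hsplit : ∑ j ∈ Finset.Icc 1 m, a j * l j
        = (∑ j ∈ Finset.Icc 1 (n - 1), a j * l j) + a n * l n := by
      have hIcc : Finset.Icc 1 m = Finset.Icc 1 n ∪ Finset.Ioc n m := by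
        ext x; simp only [Finset.mem_Icc, Finset.mem_union, Finset.mem_Ioc]; omega
      have hdisj : Disjoint (Finset.Icc 1 n) (Finset.Ioc n m) := by
        rw [Finset.disjoint_left]
        intro x hx hx'
        simp only [Finset.mem_Icc] at hx
        simp only [Finset.mem_Ioc] at hx'
        omega
      rw [hIcc, Finset.sum_union hdisj]
      have h0 : ∑ j ∈ Finset.Ioc n m, a j * l j = 0 := by
        apply Finset.sum_eq_zero
        intro x hx
        rcases Finset.mem_Ioc.mp hx with ⟨h1, h2⟩
        rw [hz x h1 h2, mul_zero]
      rw [h0, add_zero]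
      have hins : Finset.Icc 1 n = insert n (Finset.Icc 1 (n - 1)) := by
        ext x; simp only [Finset.mem_Icc, Finset.mem_insert]; omega
      rw [hins, Finset.sum_insert (by simp only [Finset.mem_Icc]; omega)]
      ring
    -- D divides the partial sum
    have hdvd1 : D ∣ ∑ j ∈ Finset.Icc 1 (n - 1), a j * l j :=
      Finset.dvd_sum fun j hj => by
        rcases Finset.mem_Icc.mp hj with ⟨h1, h2⟩
        exact (ddvd (n - 1) j h1 h2).mul_right _
    -- D divides the RHS
    have hdvd2 : D ∣ a i * (dseq a (i - 1) / dseq a i) := by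
      rcases eq_or_lt_of_le hin with heq | hlt
      · have gipos : 0 < dseq a i := dpos i (by omega) him
        obtain ⟨q, hq⟩ : dseq a i ∣ dseq a (i - 1) := dmono (i - 1) i (by omega)
        obtain ⟨p, hp⟩ : dseq a i ∣ a i := ddvd i i (by omega) le_rfl
        have hqD : dseq a (i - 1) / dseq a i = q := by
          rw [hq, Nat.mul_div_cancel_left _ gipos]
        have hDi : D = dseq a (i - 1) := by rw [hD, ← heq]
        rw [hDi, hqD, hp, hq]
        exact ⟨p, by ring⟩
      · have h1 : D ∣ dseq a i := dmono i (n - 1) (by omega)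
        exact (h1.trans (ddvd i i (by omega) le_rfl)).mul_right _
    -- conclude D ∣ a n * l n
    have hdvd3 : D ∣ a n * l n := by
      rw [hsplit] at hsum
      exact (Nat.dvd_add_right hdvd1).mp (hsum ▸ hdvd2)
    -- extract e ∣ l n
    set e := D / g with he
    have hepos : 0 < e := Nat.div_pos (Nat.le_of_dvd Dpos hgD) gpos
    have hgcdn : Nat.gcd (a n) D = g := (dstep n (by omega)).symm
    have hcop : Nat.Coprime (a n / g) e := by
      have := Nat.coprime_div_gcd_div_gcd (m := a n) (n := D) (by rw [hgcdn]; exact gpos)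
      rwa [hgcdn] at this
    have hanp : a n = g * (a n / g) := (Nat.mul_div_cancel' (ddvd n n (by omega) le_rfl)).symm
    have hDe : D = g * e := (Nat.mul_div_cancel' hgD).symm
    have hediv : e ∣ (a n / g) * l n := by
      have : g * e ∣ g * ((a n / g) * l n) := by
        rw [← hDe, ← mul_assoc, ← hanp]; exact hdvd3
      exact (mul_dvd_mul_iff_left (by omega : g ≠ 0)).mp this
    have heln : e ∣ l n := (Nat.Coprime.symm hcop).dvd_of_dvd_mul_left hediv
    -- bound from InB
    have hbound : l n ≤ e - 1 := hB n hn2 hnm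
    rcases Nat.eq_zero_or_pos (l n) with h | h
    · exact h
    · exfalso
      have := Nat.le_of_dvd h heln
      omega
  -- downward induction
  suffices H : ∀ k j, i ≤ j → j ≤ m → m - j ≤ k → l j = 0 by
    intro j h1 h2; exact H m j h1 h2 (by omega)
  intro k
  induction k with
  | zero =>
    intro j h1 h2 h3
    exact key j h1 h2 (fun j' hj' hj'm => by omega)
  | succ k ih =>
    intro j h1 h2 h3
    exact key j h1 h2 fun j' hj' hj'm => ih j' (by omega) hj'm (by omega)
end

section
/- Let (a_1,…,a_m) be a telescopic sequence and let S = a_1ℤ_{≥0} + ⋯ + a_mℤ_{≥0}. Then the number of gaps, i.e. the cardinality of ℤ_{≥0} \ S, equals g = (1 + Σ_{i=2}^m a_i·d_{i−1}/d_i − Σ_{i=1}^m a_i)/2. -/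
namespace TeleAux

lemma dseq_one (a : ℕ → ℕ) : dseq a 1 = a 1 := by
  simp [dseq]

lemma dseq_dvd (a : ℕ → ℕ) {i j : ℕ} (h1 : 1 ≤ j) (h2 : j ≤ i) : dseq a i ∣ a j :=
  Finset.gcd_dvd (Finset.mem_Icc.mpr ⟨h1, h2⟩)

lemma dseq_dvd_dseq (a : ℕ → ℕ) {i j : ℕ} (h : j ≤ i) : dseq a i ∣ dseq a j :=
  Finset.dvd_gcd fun _ hb => Finset.gcd_dvd (Finset.Icc_subset_Icc_right h hb)

lemma dseq_pos (a : ℕ → ℕ) (ha : 0 < a 1) {i : ℕ} (h1 : 1 ≤ i) : 0 < dseq a i := by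
  rcases Nat.eq_zero_or_pos (dseq a i) with h | h
  · exfalso
    have := dseq_dvd a le_rfl h1
    rw [h] at this
    simp at this
    omega
  · exact h

lemma dseq_rec (a : ℕ → ℕ) {i : ℕ} (h : 2 ≤ i) :
    dseq a i = Nat.gcd (a i) (dseq a (i - 1)) := by
  have : Finset.Icc 1 i = insert i (Finset.Icc 1 (i - 1)) := by
    ext j; simp only [Finset.mem_Icc, Finset.mem_insert]; omega
  rw [dseq, this, Finset.gcd_insert]
  rfl

/-- `e_i = d_{i-1}/d_i`. -/
def eseq (a : ℕ → ℕ) (i : ℕ) : ℕ := dseq a (i - 1) / dseq a i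

lemma eseq_mul (a : ℕ → ℕ) {i : ℕ} (h2 : 2 ≤ i) :
    eseq a i * dseq a i = dseq a (i - 1) :=
  Nat.div_mul_cancel (dseq_dvd_dseq a (by omega))

lemma eseq_pos (a : ℕ → ℕ) (ha : 0 < a 1) {i : ℕ} (h2 : 2 ≤ i) : 0 < eseq a i :=
  Nat.div_pos (Nat.le_of_dvd (dseq_pos a ha (by omega)) (dseq_dvd_dseq a (by omega)))
    (dseq_pos a ha (by omega))

lemma tele_mul (m : ℕ) (a : ℕ → ℕ) (htel : Telescopic m a)
    {i : ℕ} (h2 : 2 ≤ i) (him : i ≤ m) :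
    ∃ k : ℕ → ℕ, a i * eseq a i = ∑ j ∈ Finset.Ioc 0 (i - 1), a j * k j := by
  obtain ⟨k, hk⟩ := htel i h2 him
  refine ⟨k, ?_⟩
  have h1 : a i / dseq a i * dseq a (i - 1) = a i * eseq a i := by
    rw [← eseq_mul a h2, mul_comm (eseq a i), ← mul_assoc,
      Nat.div_mul_cancel (dseq_dvd a (by omega : (1:ℕ) ≤ i) le_rfl)]
  have h3 : (∑ j ∈ Finset.Icc 1 (i - 1), (a j / dseq a (i - 1)) * k j) * dseq a (i - 1)
      = ∑ j ∈ Finset.Icc 1 (i - 1), a j * k j := by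
    rw [Finset.sum_mul]
    refine Finset.sum_congr rfl fun j hj => ?_
    rw [Finset.mem_Icc] at hj
    rw [mul_right_comm, Nat.div_mul_cancel (dseq_dvd a hj.1 hj.2)]
  rw [← Finset.Icc_add_one_left_eq_Ioc, Nat.zero_add, ← h3, ← hk, h1]

lemma prod_eseq (m : ℕ) (a : ℕ → ℕ) (ha : 0 < a 1) (hd : dseq a m = 1) (hm : 1 ≤ m) :
    ∏ i ∈ Finset.Ioc 1 m, eseq a i = a 1 := by
  have key : ∀ t, 1 ≤ t → t ≤ m → (∏ i ∈ Finset.Ioc 1 t, eseq a i) * dseq a t = a 1 := by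
    intro t ht
    induction t, ht using Nat.le_induction with
    | base => intro _; simp [dseq_one]
    | succ t ht IH =>
      intro htm
      have hins : Finset.Ioc 1 (t+1) = insert (t+1) (Finset.Ioc 1 t) := by
        ext j; simp only [Finset.mem_Ioc, Finset.mem_insert]; omega
      rw [hins, Finset.prod_insert (by simp [Finset.mem_Ioc])]
      rw [mul_comm (eseq a (t+1)), mul_assoc]
      have : eseq a (t+1) * dseq a (t+1) = dseq a t := by
        have := eseq_mul a (show 2 ≤ t + 1 by omega)
        simpa using this
      rw [this]
      exact IH (by omega)
  have := key m hm le_rfl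
  rwa [hd, mul_one] at this

lemma reduce (m : ℕ) (a : ℕ → ℕ) (ha : 0 < a 1) (htel : Telescopic m a) :
    ∀ t (x : ℕ → ℕ), (∀ j, 2 ≤ j → t < j → j ≤ m → x j < eseq a j) →
    ∃ y : ℕ → ℕ, (∀ j, 2 ≤ j → j ≤ m → y j < eseq a j) ∧
      ∑ i ∈ Finset.Ioc 0 m, a i * y i = ∑ i ∈ Finset.Ioc 0 m, a i * x i := by
  intro t
  induction t with
  | zero => exact fun x hx => ⟨x, fun j h2 hjm => hx j h2 (by omega) hjm, rfl⟩
  | succ t IH =>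
    intro x hx
    by_cases hcase : 2 ≤ t + 1 ∧ t + 1 ≤ m
    · obtain ⟨h2, him⟩ := hcase
      set i := t + 1 with hi
      obtain ⟨k, hk⟩ := tele_mul m a htel h2 him
      set q := x i / eseq a i with hq
      set r := x i % eseq a i with hr
      set x' : ℕ → ℕ := fun j => if j < i then x j + q * k j else if j = i then r else x j
        with hx'
      have split1 : ∀ f : ℕ → ℕ, ∑ j ∈ Finset.Ioc 0 m, f j
          = (∑ j ∈ Finset.Ioc 0 (i-1), f j + f i) + ∑ j ∈ Finset.Ioc i m, f j := by
        intro f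
        rw [← Finset.sum_Ioc_consecutive f (by omega : 0 ≤ i) him]
        congr 1
        rw [← Finset.sum_Ioc_consecutive f (by omega : (0:ℕ) ≤ i-1) (by omega : i-1 ≤ i)]
        have hsing : Finset.Ioc (i-1) i = {i} := by
          ext j; simp only [Finset.mem_Ioc, Finset.mem_singleton]; omega
        rw [hsing, Finset.sum_singleton]
      have hsum : ∑ j ∈ Finset.Ioc 0 m, a j * x' j = ∑ j ∈ Finset.Ioc 0 m, a j * x j := by
        rw [split1, split1 (fun j => a j * x j)]
        have e1 : ∑ j ∈ Finset.Ioc 0 (i-1), a j * x' j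
            = ∑ j ∈ Finset.Ioc 0 (i-1), a j * x j + q * (a i * eseq a i) := by
          rw [hk, Finset.mul_sum, ← Finset.sum_add_distrib]
          refine Finset.sum_congr rfl fun j hj => ?_
          rw [Finset.mem_Ioc] at hj
          have : x' j = x j + q * k j := by simp only [hx']; rw [if_pos (by omega)]
          rw [this]; ring
        have e2 : x' i = r := by simp [hx']
        have e3 : ∑ j ∈ Finset.Ioc i m, a j * x' j = ∑ j ∈ Finset.Ioc i m, a j * x j := by
          refine Finset.sum_congr rfl fun j hj => ?_
          rw [Finset.mem_Ioc] at hj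
          have : x' j = x j := by simp only [hx']; rw [if_neg (by omega), if_neg (by omega)]
          rw [this]
        have e4 : a i * x i = q * (a i * eseq a i) + a i * r := by
          have hxv : eseq a i * q + r = x i := Nat.div_add_mod (x i) (eseq a i)
          rw [← hxv]; ring
        rw [e1, e2, e3, e4]
        ring
      have hcond : ∀ j, 2 ≤ j → t < j → j ≤ m → x' j < eseq a j := by
        intro j hj2 hjt hjm
        rcases eq_or_lt_of_le (Nat.succ_le_of_lt hjt) with hji | hji
        · have : x' j = r := by
            simp only [hx']; rw [if_neg (by omega), if_pos (by omega)]
          rw [this, ← hji]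
          exact Nat.mod_lt _ (eseq_pos a ha h2)
        · have : x' j = x j := by
            simp only [hx']; rw [if_neg (by omega), if_neg (by omega)]
          rw [this]
          exact hx j hj2 (by omega) hjm
      obtain ⟨y, hy1, hy2⟩ := IH x' hcond
      exact ⟨y, hy1, by rw [hy2, hsum]⟩
    · refine IH x fun j hj2 hjt hjm => ?_
      rcases eq_or_lt_of_le (Nat.succ_le_of_lt hjt) with hji | hji
      · exact absurd ⟨by omega, by omega⟩ hcase
      · exact hx j hj2 (by omega) hjm

lemma inj_aux (m : ℕ) (a : ℕ → ℕ) (ha : 0 < a 1) (u v : ℕ → ℕ)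
    (hu : ∀ i, 2 ≤ i → i ≤ m → u i < eseq a i)
    (hv : ∀ i, 2 ≤ i → i ≤ m → v i < eseq a i)
    (hdvd : (a 1 : ℤ) ∣ (∑ i ∈ Finset.Ioc 1 m, (a i : ℤ) * u i)
      - ∑ i ∈ Finset.Ioc 1 m, (a i : ℤ) * v i) :
    ∀ i, 2 ≤ i → i ≤ m → u i = v i := by
  suffices H : ∀ k i, 2 ≤ i → i ≤ m → m - i = k → u i = v i from
    fun i h2 him => H (m - i) i h2 him rfl
  intro k
  induction k using Nat.strong_induction_on with
  | _ k IH =>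
  intro i h2 him hk
  have hhigh : ∀ j, i < j → j ≤ m → u j = v j := fun j hj hjm =>
    IH (m - j) (by omega) j (by omega) hjm rfl
  have hDa1 : (dseq a (i-1) : ℤ) ∣ (a 1 : ℤ) :=
    Int.natCast_dvd_natCast.mpr (dseq_dvd a le_rfl (by omega))
  have key : (dseq a (i-1) : ℤ) ∣ (a i : ℤ) * u i - (a i : ℤ) * v i := by
    have h0 : (dseq a (i-1) : ℤ) ∣ (∑ j ∈ Finset.Ioc 1 m, (a j : ℤ) * u j)
        - ∑ j ∈ Finset.Ioc 1 m, (a j : ℤ) * v j := hDa1.trans hdvd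
    have hsplit : ∀ w : ℕ → ℕ, ∑ j ∈ Finset.Ioc 1 m, (a j : ℤ) * w j
        = (∑ j ∈ Finset.Ioc 1 (i-1), (a j : ℤ) * w j + (a i : ℤ) * w i)
          + ∑ j ∈ Finset.Ioc i m, (a j : ℤ) * w j := by
      intro w
      rw [← Finset.sum_Ioc_consecutive (fun j => (a j : ℤ) * w j) (by omega : 1 ≤ i) him]
      congr 1
      rw [← Finset.sum_Ioc_consecutive (fun j => (a j : ℤ) * w j)
        (by omega : (1:ℕ) ≤ i-1) (by omega : i-1 ≤ i)]
      have hsing : Finset.Ioc (i-1) i = {i} := by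
        ext j; simp only [Finset.mem_Ioc, Finset.mem_singleton]; omega
      rw [hsing, Finset.sum_singleton]
    rw [hsplit u, hsplit v] at h0
    have hupper : ∑ j ∈ Finset.Ioc i m, (a j : ℤ) * u j
        = ∑ j ∈ Finset.Ioc i m, (a j : ℤ) * v j :=
      Finset.sum_congr rfl fun j hj => by
        rw [Finset.mem_Ioc] at hj; rw [hhigh j hj.1 hj.2]
    have hlow : (dseq a (i-1) : ℤ) ∣ (∑ j ∈ Finset.Ioc 1 (i-1), (a j : ℤ) * u j)
        - ∑ j ∈ Finset.Ioc 1 (i-1), (a j : ℤ) * v j := by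
      rw [← Finset.sum_sub_distrib]
      refine Finset.dvd_sum fun j hj => ?_
      rw [Finset.mem_Ioc] at hj
      have hdj : (dseq a (i-1) : ℤ) ∣ (a j : ℤ) :=
        Int.natCast_dvd_natCast.mpr (dseq_dvd a (by omega) hj.2)
      have : (a j : ℤ) * u j - (a j : ℤ) * v j = (a j : ℤ) * ((u j : ℤ) - v j) := by ring
      rw [this]
      exact hdj.mul_right _
    have heq : (a i : ℤ) * u i - (a i : ℤ) * v i
        = ((∑ j ∈ Finset.Ioc 1 (i-1), (a j : ℤ) * u j + (a i : ℤ) * u i)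
            + ∑ j ∈ Finset.Ioc i m, (a j : ℤ) * u j
          - ((∑ j ∈ Finset.Ioc 1 (i-1), (a j : ℤ) * v j + (a i : ℤ) * v i)
            + ∑ j ∈ Finset.Ioc i m, (a j : ℤ) * v j))
          - ((∑ j ∈ Finset.Ioc 1 (i-1), (a j : ℤ) * u j)
            - ∑ j ∈ Finset.Ioc 1 (i-1), (a j : ℤ) * v j) := by
      rw [hupper]; ring
    rw [heq]
    exact dvd_sub h0 hlow
  have hgpos : 0 < dseq a i := dseq_pos a ha (by omega)
  have hgrec := dseq_rec a h2
  have hcop : Nat.Coprime (a i / dseq a i) (eseq a i) := by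
    have hgcdpos : 0 < Nat.gcd (a i) (dseq a (i-1)) := by rw [← hgrec]; exact hgpos
    have := Nat.coprime_div_gcd_div_gcd hgcdpos
    rw [← hgrec] at this
    exact this
  have hai : dseq a i * (a i / dseq a i) = a i :=
    Nat.mul_div_cancel' (dseq_dvd a (by omega) le_rfl)
  set z : ℤ := (u i : ℤ) - v i with hz
  have key2 : (eseq a i : ℤ) ∣ ((a i / dseq a i : ℕ) : ℤ) * z := by
    have h1 : (a i : ℤ) * u i - (a i : ℤ) * v i
        = (dseq a i : ℤ) * (((a i / dseq a i : ℕ) : ℤ) * z) := by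
      have hcast : ((dseq a i : ℕ) : ℤ) * ((a i / dseq a i : ℕ) : ℤ) = (a i : ℤ) := by
        exact_mod_cast congrArg (Nat.cast : ℕ → ℤ) hai
      rw [← hcast, hz]; ring
    rw [h1] at key
    have hd : (dseq a (i-1) : ℤ) = (dseq a i : ℤ) * (eseq a i : ℤ) := by
      rw [← eseq_mul a h2]; push_cast; ring
    rw [hd] at key
    exact (mul_dvd_mul_iff_left (show (dseq a i : ℤ) ≠ 0 by exact_mod_cast hgpos.ne')).mp key
  have hcopZ : IsCoprime ((eseq a i : ℕ) : ℤ) ((a i / dseq a i : ℕ) : ℤ) := by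
    rw [Nat.isCoprime_iff_coprime]
    exact hcop.symm
  have hez : (eseq a i : ℤ) ∣ z := hcopZ.dvd_of_dvd_mul_left key2
  have hz0 : z = 0 := by
    refine Int.eq_zero_of_abs_lt_dvd hez ?_
    have h1 := hu i h2 him
    have h2' := hv i h2 him
    rw [abs_lt]
    constructor <;> (rw [hz]; omega)
  rw [hz] at hz0
  omega

lemma card_residue_lt (A c : ℕ) (hA : 0 < A) :
    ((Finset.range c).filter (fun n => n % A = c % A)).card = c / A := by
  rw [← Finset.card_range (c / A)]
  apply Finset.card_nbij' (i := fun n => n / A) (j := fun k => c % A + A * k)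
  · intro n hn
    rw [Finset.mem_coe, Finset.mem_filter, Finset.mem_range] at hn
    obtain ⟨hlt, hmod⟩ := hn
    rw [Finset.mem_coe, Finset.mem_range]
    have h1 := Nat.div_add_mod n A
    have h2 := Nat.div_add_mod c A
    have h3 : A * (n / A) < A * (c / A) := by omega
    exact Nat.lt_of_mul_lt_mul_left h3
  · intro k hk
    rw [Finset.mem_coe, Finset.mem_range] at hk
    rw [Finset.mem_coe, Finset.mem_filter, Finset.mem_range]
    have h1 : A * (k + 1) ≤ A * (c / A) := Nat.mul_le_mul_left A (by omega)
    rw [Nat.mul_add, Nat.mul_one] at h1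
    have h2 := Nat.div_add_mod c A
    dsimp only
    constructor
    · omega
    · rw [Nat.add_mul_mod_self_left]
      exact Nat.mod_mod_of_dvd c dvd_rfl
  · intro n hn
    rw [Finset.mem_coe, Finset.mem_filter] at hn
    have h1 := Nat.div_add_mod n A
    dsimp only
    omega
  · intro k hk
    rw [Finset.mem_coe, Finset.mem_range] at hk
    dsimp only
    rw [Nat.add_mul_div_left _ _ hA, Nat.div_eq_of_lt (Nat.mod_lt _ hA)]
    omega

end TeleAux

open TeleAux in
/-- For a telescopic sequence `(a_1,…,a_m)`, the number `g` of gaps of the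
numerical semigroup `S = a_1 ℤ_{≥0} + ⋯ + a_m ℤ_{≥0}` satisfies
`g = (1 + ∑_{i=2}^m a_i d_{i-1}/d_i - ∑_{i=1}^m a_i)/2`. -/
theorem telescopic_genus_formula
    (m : ℕ) (hm : 2 ≤ m) (a : ℕ → ℕ)
    (hpos : ∀ i, 1 ≤ i → i ≤ m → 0 < a i)
    (hgcd : (Finset.Icc 1 m).gcd a = 1)
    (htel : Telescopic m a) :
    2 * (Set.ncard {n : ℕ | ¬ ∃ x : ℕ → ℕ, n = ∑ i ∈ Finset.Icc 1 m, a i * x i} : ℤ)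
      = 1 + ∑ i ∈ Finset.Icc 2 m, (a i : ℤ) * ((dseq a (i - 1) / dseq a i : ℕ) : ℤ)
          - ∑ i ∈ Finset.Icc 1 m, (a i : ℤ) := by
  classical
  have hA : 0 < a 1 := hpos 1 le_rfl (by omega)
  have hdm : dseq a m = 1 := hgcd
  have hIcc1 : Finset.Icc 1 m = Finset.Ioc 0 m := Finset.Icc_add_one_left_eq_Ioc 0 m
  have hIcc2 : Finset.Icc 2 m = Finset.Ioc 1 m := Finset.Icc_add_one_left_eq_Ioc 1 m
  set A := a 1 with hAdef
  have hprod : ∏ i ∈ Finset.Ioc 1 m, eseq a i = A := prod_eseq m a hA hdm (by omega)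
  set box := (Finset.Icc 2 m).pi (fun i => Finset.range (eseq a i)) with hboxdef
  set ex : (∀ i ∈ Finset.Icc 2 m, ℕ) → ℕ → ℕ :=
    fun x i => if h : i ∈ Finset.Icc 2 m then x i h else 0 with hexdef
  set C : (∀ i ∈ Finset.Icc 2 m, ℕ) → ℕ :=
    fun x => ∑ i ∈ Finset.Ioc 1 m, a i * ex x i with hCdef
  have hexval : ∀ x i (h : i ∈ Finset.Icc 2 m), ex x i = x i h := by
    intro x i h; simp only [hexdef]; rw [dif_pos h]
  have hboxlt : ∀ x ∈ box, ∀ i, 2 ≤ i → i ≤ m → ex x i < eseq a i := by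
    intro x hx i h2 him
    have hmem : i ∈ Finset.Icc 2 m := Finset.mem_Icc.mpr ⟨h2, him⟩
    rw [hexval x i hmem]
    exact Finset.mem_range.mp ((Finset.mem_pi.mp hx) i hmem)
  have hCcast : ∀ x, ((C x : ℕ) : ℤ) = ∑ i ∈ Finset.Ioc 1 m, (a i : ℤ) * ex x i := by
    intro x; simp only [hCdef]; push_cast; rfl
  have hinj : ∀ x ∈ box, ∀ y ∈ box, C x % A = C y % A → x = y := by
    intro x hx y hy hmod
    have hdvd : (A : ℤ) ∣ (∑ i ∈ Finset.Ioc 1 m, (a i : ℤ) * ex x i)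
        - ∑ i ∈ Finset.Ioc 1 m, (a i : ℤ) * ex y i := by
      rw [← hCcast, ← hCcast]
      exact Nat.ModEq.dvd (show C y ≡ C x [MOD A] from hmod.symm)
    have heq := inj_aux m a hA (ex x) (ex y)
      (fun i h2 him => hboxlt x hx i h2 him) (fun i h2 him => hboxlt y hy i h2 him) hdvd
    funext i h
    have hi2 := (Finset.mem_Icc.mp h).1
    have him := (Finset.mem_Icc.mp h).2
    have := heq i hi2 him
    rwa [hexval x i h, hexval y i h] at this
  have hcard : box.card = A := by
    rw [hboxdef, Finset.card_pi]
    simp only [Finset.card_range]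
    rw [hIcc2, hprod]
  have himg : box.image (fun x => C x % A) = Finset.range A := by
    apply Finset.eq_of_subset_of_card_le
    · intro r hr
      rw [Finset.mem_image] at hr
      obtain ⟨x, _, rfl⟩ := hr
      exact Finset.mem_range.mpr (Nat.mod_lt _ hA)
    · rw [Finset.card_range,
        Finset.card_image_of_injOn (fun x hx y hy h => hinj x hx y hy h), hcard]
  have hsurj : ∀ n : ℕ, ∃ x, x ∈ box ∧ C x % A = n % A := by
    intro n
    have hmem : n % A ∈ Finset.range A := Finset.mem_range.mpr (Nat.mod_lt _ hA)
    rw [← himg, Finset.mem_image] at hmem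
    obtain ⟨x, hx, hxe⟩ := hmem
    exact ⟨x, hx, hxe⟩
  have h01 : Finset.Ioc (0:ℕ) 1 = {1} := by
    ext j; simp only [Finset.mem_Ioc, Finset.mem_singleton]; omega
  have hchar : ∀ (n : ℕ) x, x ∈ box → C x % A = n % A →
      ((∃ y : ℕ → ℕ, n = ∑ i ∈ Finset.Icc 1 m, a i * y i) ↔ C x ≤ n) := by
    intro n x hx hmod
    constructor
    · rintro ⟨y, hyrep⟩
      obtain ⟨y', hy'lt, hy'sum⟩ := reduce m a hA htel m y
        (fun j h2 hjt hjm => absurd hjt (by omega))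
      set x' : (∀ i ∈ Finset.Icc 2 m, ℕ) := fun i _ => y' i with hx'def
      have hx'box : x' ∈ box := by
        rw [hboxdef, Finset.mem_pi]
        intro i hi
        rw [Finset.mem_Icc] at hi
        exact Finset.mem_range.mpr (hy'lt i hi.1 hi.2)
      have hCx' : C x' = ∑ i ∈ Finset.Ioc 1 m, a i * y' i := by
        simp only [hCdef]
        refine Finset.sum_congr rfl fun i hi => ?_
        rw [hexval x' i (by rw [hIcc2]; exact hi)]
      have hsplit : ∑ i ∈ Finset.Ioc 0 m, a i * y' i
          = a 1 * y' 1 + ∑ i ∈ Finset.Ioc 1 m, a i * y' i := by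
        rw [← Finset.sum_Ioc_consecutive (fun i => a i * y' i)
          (by omega : (0:ℕ) ≤ 1) (by omega : 1 ≤ m), h01, Finset.sum_singleton]
      have hn : n = A * y' 1 + C x' := by
        rw [hyrep, hIcc1, ← hy'sum, hsplit, hCx']
      have hm2 : C x' % A = n % A := by
        rw [hn]; exact (Nat.mul_add_mod A (y' 1) (C x')).symm
      have hxeq : x' = x := hinj x' hx'box x hx (by rw [hm2, hmod])
      rw [← hxeq, hn]
      exact Nat.le_add_left _ _
    · intro hle
      have hdvd : A ∣ n - C x := (Nat.modEq_iff_dvd' hle).mp hmod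
      obtain ⟨t, ht⟩ := hdvd
      refine ⟨fun i => if i = 1 then t else ex x i, ?_⟩
      rw [hIcc1]
      have hsplit : ∑ i ∈ Finset.Ioc 0 m, (a i * if i = 1 then t else ex x i)
          = a 1 * t + ∑ i ∈ Finset.Ioc 1 m, a i * ex x i := by
        rw [← Finset.sum_Ioc_consecutive (fun i => a i * if i = 1 then t else ex x i)
          (by omega : (0:ℕ) ≤ 1) (by omega : 1 ≤ m), h01, Finset.sum_singleton]
        have h2 : ∑ i ∈ Finset.Ioc 1 m, (a i * if i = 1 then t else ex x i)
            = ∑ i ∈ Finset.Ioc 1 m, a i * ex x i := by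
          refine Finset.sum_congr rfl fun i hi => ?_
          rw [Finset.mem_Ioc] at hi
          rw [if_neg (by omega)]
        rw [h2]
        norm_num
      rw [hsplit]
      have hA1 : a 1 * t = A * t := rfl
      rw [hA1]
      have hCx : C x = ∑ i ∈ Finset.Ioc 1 m, a i * ex x i := rfl
      omega
  set gapsOf : (∀ i ∈ Finset.Icc 2 m, ℕ) → Finset ℕ :=
    fun x => (Finset.range (C x)).filter (fun n => n % A = C x % A) with hgapsdef
  set G := box.biUnion gapsOf with hGdef
  have hmemG : ∀ n : ℕ, n ∈ G ↔ ¬ ∃ y : ℕ → ℕ, n = ∑ i ∈ Finset.Icc 1 m, a i * y i := by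
    intro n
    obtain ⟨x, hx, hxm⟩ := hsurj n
    rw [hGdef, Finset.mem_biUnion]
    constructor
    · rintro ⟨z, hz, hnz⟩
      simp only [hgapsdef, Finset.mem_filter, Finset.mem_range] at hnz
      have hzx : z = x := hinj z hz x hx (by rw [← hnz.2, hxm])
      rw [hzx] at hnz
      intro hS
      have := (hchar n x hx hxm).1 hS
      omega
    · intro hS
      refine ⟨x, hx, ?_⟩
      simp only [hgapsdef, Finset.mem_filter, Finset.mem_range]
      refine ⟨?_, hxm.symm⟩
      by_contra hlt
      push_neg at hlt
      exact hS ((hchar n x hx hxm).2 hlt)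
  have hset : {n : ℕ | ¬ ∃ x : ℕ → ℕ, n = ∑ i ∈ Finset.Icc 1 m, a i * x i} = ↑G := by
    ext n
    simp only [Set.mem_setOf_eq, Finset.mem_coe]
    exact (hmemG n).symm
  rw [hset, Set.ncard_coe_finset]
  have hGcard : G.card = ∑ x ∈ box, C x / A := by
    rw [hGdef, Finset.card_biUnion]
    · exact Finset.sum_congr rfl fun x _ => card_residue_lt A (C x) hA
    · intro x hx y hy hxy
      rw [Function.onFun, Finset.disjoint_left]
      intro n hnx hny
      simp only [hgapsdef, Finset.mem_filter] at hnx hny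
      exact hxy (hinj x hx y hy (by rw [← hnx.2, hny.2]))
  set T := ∑ i ∈ Finset.Ioc 1 m, a i * (eseq a i - 1) with hTdef
  set inv : (∀ i ∈ Finset.Icc 2 m, ℕ) → (∀ i ∈ Finset.Icc 2 m, ℕ) :=
    fun x i h => eseq a i - 1 - x i h with hinvdef
  have hinvbox : ∀ x ∈ box, inv x ∈ box := by
    intro x hx
    rw [hboxdef, Finset.mem_pi]
    intro i hi
    rw [Finset.mem_range]
    have h2 := (Finset.mem_Icc.mp hi).1
    have := eseq_pos a hA h2
    simp only [hinvdef]
    omega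
  have hinvinv : ∀ x ∈ box, inv (inv x) = x := by
    intro x hx
    funext i h
    have hlt := hboxlt x hx i (Finset.mem_Icc.mp h).1 (Finset.mem_Icc.mp h).2
    rw [hexval x i h] at hlt
    simp only [hinvdef]
    omega
  have hflip : ∑ x ∈ box, C (inv x) = ∑ x ∈ box, C x :=
    Finset.sum_nbij' inv inv hinvbox hinvbox hinvinv hinvinv (fun x _ => rfl)
  have hpair : ∀ x ∈ box, C x + C (inv x) = T := by
    intro x hx
    simp only [hCdef, hTdef, ← Finset.sum_add_distrib]
    refine Finset.sum_congr rfl fun i hi => ?_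
    rw [Finset.mem_Ioc] at hi
    have hmem : i ∈ Finset.Icc 2 m := Finset.mem_Icc.mpr ⟨by omega, hi.2⟩
    have hlt := hboxlt x hx i (by omega) hi.2
    rw [hexval x i hmem] at hlt
    rw [hexval x i hmem, hexval (inv x) i hmem]
    simp only [hinvdef]
    rw [← Nat.mul_add]
    congr 1
    omega
  have hSg2 : 2 * (∑ x ∈ box, C x) = A * T := by
    calc 2 * ∑ x ∈ box, C x = ∑ x ∈ box, C x + ∑ x ∈ box, C (inv x) := by
          rw [hflip]; ring
      _ = ∑ x ∈ box, (C x + C (inv x)) := (Finset.sum_add_distrib).symm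
      _ = ∑ _x ∈ box, T := Finset.sum_congr rfl hpair
      _ = box.card * T := by rw [Finset.sum_const, smul_eq_mul]
      _ = A * T := by rw [hcard]
  have hSr : ∑ x ∈ box, C x % A = ∑ r ∈ Finset.range A, r := by
    rw [← himg, Finset.sum_image (fun x hx y hy h => hinj x hx y hy h)]
  have hSr2 : 2 * (∑ x ∈ box, C x % A) = A * (A - 1) := by
    rw [hSr, mul_comm]
    exact Finset.sum_range_id_mul_two A
  have hAg : A * G.card + ∑ x ∈ box, C x % A = ∑ x ∈ box, C x := by
    rw [hGcard, Finset.mul_sum, ← Finset.sum_add_distrib]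
    exact Finset.sum_congr rfl fun x _ => Nat.div_add_mod (C x) A
  -- pass to ℤ
  set g := G.card with hgdef
  set sg := ∑ x ∈ box, C x with hsgdef
  set sr := ∑ x ∈ box, C x % A with hsrdef
  have hcast : (A : ℤ) * (2 * g) = (A : ℤ) * ((T : ℤ) - A + 1) := by
    have e1 : (2:ℤ) * sg = (A:ℤ) * T := by exact_mod_cast hSg2
    have e2 : (2:ℤ) * sr = (A:ℤ) * ((A - 1 : ℕ) : ℤ) := by exact_mod_cast hSr2
    have e3 : (A:ℤ) * g + sr = sg := by exact_mod_cast hAg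
    have e4 : ((A - 1 : ℕ) : ℤ) = (A:ℤ) - 1 := by
      rw [Nat.cast_sub (by omega)]; rfl
    rw [e4] at e2
    linarith
  have h2g : 2 * (g : ℤ) = (T : ℤ) - A + 1 :=
    mul_left_cancel₀ (show (A:ℤ) ≠ 0 by exact_mod_cast hA.ne') hcast
  have hrhs : ∑ i ∈ Finset.Icc 2 m, (a i : ℤ) * ((dseq a (i - 1) / dseq a i : ℕ) : ℤ)
      = ∑ i ∈ Finset.Ioc 1 m, (a i : ℤ) * ((eseq a i : ℕ) : ℤ) := by
    rw [hIcc2]; rfl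
  have hT : (T : ℤ) = ∑ i ∈ Finset.Ioc 1 m, (a i : ℤ) * ((eseq a i : ℕ) : ℤ)
      - ∑ i ∈ Finset.Ioc 1 m, (a i : ℤ) := by
    rw [← Finset.sum_sub_distrib, hTdef]
    push_cast
    refine Finset.sum_congr rfl fun i hi => ?_
    rw [Finset.mem_Ioc] at hi
    have he := eseq_pos a hA (show 2 ≤ i by omega)
    rw [Nat.cast_sub (by omega)]
    push_cast
    ring
  have hsum1 : ∑ i ∈ Finset.Icc 1 m, (a i : ℤ)
      = (A : ℤ) + ∑ i ∈ Finset.Ioc 1 m, (a i : ℤ) := by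
    rw [hIcc1, ← Finset.sum_Ioc_consecutive (fun i => (a i : ℤ))
      (by omega : (0:ℕ) ≤ 1) (by omega : 1 ≤ m), h01, Finset.sum_singleton]
  rw [hrhs, hsum1]
  linarith
end

section
/- Let (a_1,…,a_m) be a telescopic sequence, S the numerical semigroup it generates, g ≥ 1 the number of gaps, w_1 < ⋯ < w_g the gaps, and w*_1 < ⋯ < w*_g the g smallest elements of S. Then {w_1,…,w_g} and {w*_1,…,w*_g} are disjoint with union {0, 1, …, 2g − 1}, and for every 1 ≤ i ≤ g one has 2g − 1 − w*_{g+1−i} = w_i. -/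
namespace TelAux

lemma dseq_dvd (a : ℕ → ℕ) {i j : ℕ} (h1 : 1 ≤ j) (h2 : j ≤ i) : dseq a i ∣ a j :=
  Finset.gcd_dvd (Finset.mem_Icc.mpr ⟨h1, h2⟩)

lemma dseq_pos (a : ℕ → ℕ) {i : ℕ} (hi : 1 ≤ i) (ha : 0 < a 1) : 0 < dseq a i :=
  Nat.pos_of_dvd_of_pos (dseq_dvd a le_rfl hi) ha

lemma dseq_succ (a : ℕ → ℕ) (i : ℕ) (hi : 1 ≤ i) :
    dseq a (i+1) = Nat.gcd (a (i+1)) (dseq a i) := by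
  unfold dseq
  rw [← Finset.insert_Icc_right_eq_Icc_add_one (by omega), Finset.gcd_insert]
  rfl

lemma dseq_one (a : ℕ → ℕ) : dseq a 1 = a 1 := by
  unfold dseq
  rw [Finset.Icc_self, Finset.gcd_singleton]
  simp

def Tset (a : ℕ → ℕ) (i : ℕ) : Set ℤ :=
  {z | ∃ x : ℕ → ℕ, z = ∑ j ∈ Finset.Icc 1 i, ((a j / dseq a i : ℕ) : ℤ) * x j}

lemma tset_nonneg {a : ℕ → ℕ} {i : ℕ} {z : ℤ} (h : z ∈ Tset a i) : 0 ≤ z := by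
  obtain ⟨x, rfl⟩ := h
  positivity

lemma tset_zero (a : ℕ → ℕ) (i : ℕ) : (0 : ℤ) ∈ Tset a i :=
  ⟨fun _ => 0, by simp⟩

lemma tset_add_mul {a : ℕ → ℕ} {i : ℕ} {z1 z2 : ℤ} (h1 : z1 ∈ Tset a i)
    (h2 : z2 ∈ Tset a i) (q : ℕ) : z1 + q * z2 ∈ Tset a i := by
  obtain ⟨x, rfl⟩ := h1
  obtain ⟨y, rfl⟩ := h2
  refine ⟨fun j => x j + q * y j, ?_⟩
  rw [Finset.mul_sum, ← Finset.sum_add_distrib]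
  refine Finset.sum_congr rfl fun j _ => ?_
  rw [Nat.cast_add, Nat.cast_mul]
  ring

lemma exists_u (c b : ℕ) (hc : 0 < c) (hcop : Nat.Coprime c b) (z : ℤ) :
    ∃ u : ℕ, u < c ∧ (c : ℤ) ∣ z - b * u := by
  have hcop' : IsCoprime (b : ℤ) (c : ℤ) := by
    rw [Int.isCoprime_iff_gcd_eq_one, Int.gcd_natCast_natCast]
    exact hcop.symm
  obtain ⟨s, t, hst⟩ := hcop'
  have hc' : (0 : ℤ) < c := by exact_mod_cast hc
  set r := (z * s) % (c : ℤ) with hr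
  have hr0 : 0 ≤ r := Int.emod_nonneg _ hc'.ne'
  have hrc : r < c := Int.emod_lt_of_pos _ hc'
  refine ⟨r.toNat, by omega, ?_⟩
  rw [Int.toNat_of_nonneg hr0]
  have hq : r = z * s - c * (z * s / c) := by rw [hr, Int.emod_def]
  refine ⟨z * t + b * (z * s / c), ?_⟩
  rw [hq]
  linear_combination (-z) * hst

lemma tset_struct (a : ℕ → ℕ) (i : ℕ) (hi : 1 ≤ i) (ha : 0 < a 1) (z : ℤ) :
    z ∈ Tset a (i+1) ↔ ∃ t ∈ Tset a i, ∃ u : ℕ,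
      z = ((dseq a i / dseq a (i+1) : ℕ) : ℤ) * t
        + ((a (i+1) / dseq a (i+1) : ℕ) : ℤ) * u := by
  have hd : 0 < dseq a (i+1) := dseq_pos a (by omega) ha
  have hd' : 0 < dseq a i := dseq_pos a hi ha
  have hdvd : dseq a (i+1) ∣ dseq a i := by
    rw [dseq_succ a i hi]; exact Nat.gcd_dvd_right _ _
  have key : ∀ j, 1 ≤ j → j ≤ i →
      (a j / dseq a (i+1)) = (dseq a i / dseq a (i+1)) * (a j / dseq a i) := by
    intro j hj1 hj2
    have h1 := Nat.div_mul_div_comm hdvd (dseq_dvd a hj1 hj2)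
    -- (dseq a i / dseq a (i+1)) * (a j / dseq a i) = dseq a i * a j / (dseq a (i+1) * dseq a i)
    rw [h1, mul_comm (dseq a i) (a j), Nat.mul_div_mul_right _ _ hd']
  have hni : (i+1) ∉ Finset.Icc 1 i := by simp
  have hsum : ∀ x : ℕ → ℕ,
      ∑ j ∈ Finset.Icc 1 (i+1), ((a j / dseq a (i+1) : ℕ) : ℤ) * x j
        = ((dseq a i / dseq a (i+1) : ℕ) : ℤ)
            * ∑ j ∈ Finset.Icc 1 i, ((a j / dseq a i : ℕ) : ℤ) * x j
          + ((a (i+1) / dseq a (i+1) : ℕ) : ℤ) * x (i+1) := by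
    intro x
    rw [← Finset.insert_Icc_right_eq_Icc_add_one (by omega : 1 ≤ i + 1), Finset.sum_insert hni,
      Finset.mul_sum, add_comm]
    congr 1
    refine Finset.sum_congr rfl fun j hj => ?_
    obtain ⟨hj1, hj2⟩ := Finset.mem_Icc.mp hj
    rw [key j hj1 hj2]
    push_cast
    ring
  constructor
  · rintro ⟨x, rfl⟩
    exact ⟨_, ⟨x, rfl⟩, x (i+1), hsum x⟩
  · rintro ⟨t, ⟨y, rfl⟩, u, rfl⟩
    refine ⟨fun j => if j = i+1 then u else y j, ?_⟩
    rw [hsum]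
    simp only [if_pos rfl]
    congr 2
    · refine Finset.sum_congr rfl fun j hj => ?_
      rw [if_neg]
      intro h
      exact hni (h ▸ hj)


lemma tset_symm (m : ℕ) (a : ℕ → ℕ)
    (hpos : ∀ i, 1 ≤ i → i ≤ m → 0 < a i)
    (hm : 1 ≤ m)
    (htel : Telescopic m a) :
    ∀ i, 1 ≤ i → i ≤ m → ∃ F : ℤ, ∀ z : ℤ, z ∈ Tset a i ↔ F - z ∉ Tset a i := by
  have ha : 0 < a 1 := hpos 1 le_rfl hm
  intro i hi
  induction i, hi using Nat.le_induction with
  | base =>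
    intro _
    have hmem : ∀ z : ℤ, z ∈ Tset a 1 ↔ 0 ≤ z := by
      intro z
      constructor
      · exact tset_nonneg
      · intro hz
        refine ⟨fun _ => z.toNat, ?_⟩
        rw [Finset.Icc_self, Finset.sum_singleton, dseq_one, Nat.div_self ha]
        simp [Int.toNat_of_nonneg hz]
    refine ⟨-1, fun z => ?_⟩
    rw [hmem, hmem]
    omega
  | succ i hi ih =>
    intro him
    obtain ⟨F, hF⟩ := ih (by omega)
    have hd : 0 < dseq a (i+1) := dseq_pos a (by omega) ha
    have hd' : 0 < dseq a i := dseq_pos a hi ha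
    have hdvd : dseq a (i+1) ∣ dseq a i := by
      rw [dseq_succ a i hi]; exact Nat.gcd_dvd_right _ _
    set c := dseq a i / dseq a (i+1) with hcdef
    set b := a (i+1) / dseq a (i+1) with hbdef
    have hc : 0 < c := Nat.div_pos (Nat.le_of_dvd hd' hdvd) hd
    have hcb : Nat.Coprime c b := by
      have h0 : 0 < Nat.gcd (a (i+1)) (dseq a i) := by
        rw [← dseq_succ a i hi]; exact hd
      have := Nat.coprime_div_gcd_div_gcd h0
      rw [← dseq_succ a i hi] at this
      exact this.symm
    have hbT : (b : ℤ) ∈ Tset a i := by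
      obtain ⟨k, hk⟩ := htel (i+1) (by omega) him
      simp only [Nat.add_sub_cancel] at hk
      refine ⟨k, ?_⟩
      rw [hbdef, hk]
      push_cast
      rfl
    -- normalized membership
    have norm : ∀ z : ℤ, z ∈ Tset a (i+1) ↔
        ∃ u : ℕ, u < c ∧ ∃ t ∈ Tset a i, z = c * t + b * u := by
      intro z
      rw [tset_struct a i hi ha z]
      constructor
      · rintro ⟨t, ht, u, rfl⟩
        refine ⟨u % c, Nat.mod_lt _ hc, t + (u / c) * (b : ℤ), tset_add_mul ht hbT (u / c), ?_⟩
        have hu2 : (u : ℤ) = c * (u / c) + (u % c : ℕ) := by exact_mod_cast (Nat.div_add_mod u c).symm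
        rw [← hcdef, ← hbdef]
        linear_combination (b : ℤ) * hu2
      · rintro ⟨u, hu, t, ht, rfl⟩
        exact ⟨t, ht, u, by rw [← hcdef, ← hbdef]⟩
    have hcop : IsCoprime (c : ℤ) (b : ℤ) := by
      rw [Int.isCoprime_iff_gcd_eq_one, Int.gcd_natCast_natCast]
      exact hcb
    refine ⟨(c : ℤ) * F + ((c : ℤ) - 1) * b, fun z => ?_⟩
    constructor
    · intro hz hz'
      rw [norm] at hz hz'
      obtain ⟨u, hu, t, ht, rfl⟩ := hz
      obtain ⟨u', hu', t', ht', heq⟩ := hz'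
      have hdvd2 : (c : ℤ) ∣ (b : ℤ) * ((c : ℤ) - 1 - u - u') :=
        ⟨t + t' - F, by linear_combination heq⟩
      have he := hcop.dvd_of_dvd_mul_left hdvd2
      have he0 : (c : ℤ) - 1 - u - u' = 0 := by
        refine Int.eq_zero_of_abs_lt_dvd he ?_
        rw [abs_lt]
        constructor <;> omega
      have hlin : (c : ℤ) * (t + t' - F) = (b : ℤ) * ((c : ℤ) - 1 - u - u') := by
        linear_combination -heq
      rw [he0, mul_zero] at hlin
      have hc0 : (c : ℤ) ≠ 0 := by positivity
      have htt : t' = F - t := by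
        rcases mul_eq_zero.mp hlin with h | h
        · exact absurd h hc0
        · linarith
      exact (hF t).mp ht (by rwa [htt] at ht')
    · intro hz'
      by_contra hz
      apply hz'
      obtain ⟨u, hu, hdvdu⟩ := exists_u c b hc hcb z
      obtain ⟨t, htz⟩ := hdvdu
      have hzct : z = c * t + b * u := by linarith [htz]
      have htn : t ∉ Tset a i := fun ht => hz ((norm z).mpr ⟨u, hu, t, ht, hzct⟩)
      have hFt : F - t ∈ Tset a i := by
        by_contra hFt
        exact htn ((hF t).mpr hFt)
      refine (norm _).mpr ⟨c - 1 - u, by omega, F - t, hFt, ?_⟩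
      have : ((c - 1 - u : ℕ) : ℤ) = (c : ℤ) - 1 - u := by omega
      rw [this, hzct]
      ring


lemma enum_unique (g : ℕ) (f h : ℕ → ℕ) (hf : StrictMonoOn f (Set.Icc 1 g))
    (hh : StrictMonoOn h (Set.Icc 1 g))
    (him : ∀ n, (∃ i, 1 ≤ i ∧ i ≤ g ∧ f i = n) ↔ (∃ i, 1 ≤ i ∧ i ≤ g ∧ h i = n)) :
    ∀ i, 1 ≤ i → i ≤ g → f i = h i := by
  intro i
  induction i using Nat.strong_induction_on with
  | _ i IH =>
    intro hi1 hig
    obtain ⟨j, hj1, hjg, hj⟩ := (him (f i)).mp ⟨i, hi1, hig, rfl⟩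
    obtain ⟨j', hj'1, hj'g, hj'⟩ := (him (h i)).mpr ⟨i, hi1, hig, rfl⟩
    have h1 : h i ≤ f i := by
      rcases lt_or_ge j i with hlt | hle
      · exfalso
        have heq := IH j hlt hj1 hjg
        have hfj : f j < f i := hf (Set.mem_Icc.mpr ⟨hj1, hjg⟩) (Set.mem_Icc.mpr ⟨hi1, hig⟩) hlt
        omega
      · have := hh.monotoneOn (Set.mem_Icc.mpr ⟨hi1, hig⟩) (Set.mem_Icc.mpr ⟨hj1, hjg⟩) hle
        omega
    have h2 : f i ≤ h i := by
      rcases lt_or_ge j' i with hlt | hle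
      · exfalso
        have heq := IH j' hlt hj'1 hj'g
        have hhj : h j' < h i := hh (Set.mem_Icc.mpr ⟨hj'1, hj'g⟩) (Set.mem_Icc.mpr ⟨hi1, hig⟩) hlt
        omega
      · have := hf.monotoneOn (Set.mem_Icc.mpr ⟨hi1, hig⟩) (Set.mem_Icc.mpr ⟨hj'1, hj'g⟩) hle
        omega
    omega

end TelAux

open TelAux

/-- Let `(a_1,…,a_m)` be telescopic, `S` the numerical semigroup it generates,
`g ≥ 1` the number of gaps, `w_1 < ⋯ < w_g` the gaps and `w*_1 < ⋯ < w*_g` the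
`g` smallest elements of `S`.  Then `{w_1,…,w_g}` and `{w*_1,…,w*_g}` are
disjoint with union `{0, 1, …, 2g-1}`, and `2g - 1 - w*_{g+1-i} = w_i` for all
`1 ≤ i ≤ g`. -/
theorem telescopic_gaps_nongaps_duality
    (m : ℕ) (hm : 2 ≤ m) (a : ℕ → ℕ)
    (hpos : ∀ i, 1 ≤ i → i ≤ m → 0 < a i)
    (hgcd : (Finset.Icc 1 m).gcd a = 1)
    (htel : Telescopic m a)
    (g : ℕ)
    (hg : g = Set.ncard {n : ℕ | ¬ ∃ x : ℕ → ℕ, n = ∑ i ∈ Finset.Icc 1 m, a i * x i})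
    (hg1 : 1 ≤ g)
    (w w' : ℕ → ℕ)
    -- `w_1 < w_2 < ⋯ < w_g` enumerates the gaps of `S`:
    (hwmono : StrictMonoOn w (Set.Icc 1 g))
    (hwgaps : ∀ n : ℕ, (¬ ∃ x : ℕ → ℕ, n = ∑ i ∈ Finset.Icc 1 m, a i * x i) ↔
      ∃ i, 1 ≤ i ∧ i ≤ g ∧ w i = n)
    -- `w*_1 < w*_2 < ⋯ < w*_g` enumerates the `g` smallest elements of `S`:
    (hw'mono : StrictMonoOn w' (Set.Icc 1 g))
    (hw'mem : ∀ i, 1 ≤ i → i ≤ g → ∃ x : ℕ → ℕ, w' i = ∑ j ∈ Finset.Icc 1 m, a j * x j)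
    (hw'small : ∀ n : ℕ, (∃ x : ℕ → ℕ, n = ∑ j ∈ Finset.Icc 1 m, a j * x j) →
      (∀ i, 1 ≤ i → i ≤ g → w' i ≠ n) → w' g < n) :
    ({n : ℕ | ∃ i, 1 ≤ i ∧ i ≤ g ∧ w i = n} ∩
        {n : ℕ | ∃ i, 1 ≤ i ∧ i ≤ g ∧ w' i = n} = ∅) ∧
    ({n : ℕ | ∃ i, 1 ≤ i ∧ i ≤ g ∧ w i = n} ∪
        {n : ℕ | ∃ i, 1 ≤ i ∧ i ≤ g ∧ w' i = n} = Set.Iio (2 * g)) ∧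
    (∀ i, 1 ≤ i → i ≤ g → 2 * g - 1 - w' (g + 1 - i) = w i) := by
  classical
  set P : ℕ → Prop := fun n => ∃ x : ℕ → ℕ, n = ∑ i ∈ Finset.Icc 1 m, a i * x i with hP
  have hgcard : ∀ (s : Finset ℕ), (↑s : Set ℕ) = {n : ℕ | ¬ P n} → g = s.card := by
    intro s hs
    rw [hg, ← hs, Set.ncard_coe_finset]
  clear hg
  -- bridge between ℕ-semigroup membership and the ℤ set
  have hda : dseq a m = 1 := hgcd
  have hbridge : ∀ n : ℕ, P n ↔ (n : ℤ) ∈ Tset a m := by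
    intro n
    constructor
    · rintro ⟨x, rfl⟩
      refine ⟨x, ?_⟩
      rw [Nat.cast_sum]
      refine Finset.sum_congr rfl fun j _ => ?_
      rw [hda, Nat.div_one]
      push_cast
      ring
    · rintro ⟨x, hx⟩
      refine ⟨x, ?_⟩
      have : (n : ℤ) = ((∑ i ∈ Finset.Icc 1 m, a i * x i : ℕ) : ℤ) := by
        rw [hx, Nat.cast_sum]
        refine Finset.sum_congr rfl fun j _ => ?_
        rw [hda, Nat.div_one]
        push_cast
        ring
      exact_mod_cast this
  obtain ⟨F, hF⟩ := tset_symm m a hpos (by omega) htel m (by omega) le_rfl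
  have h0S : P 0 := ⟨fun _ => 0, by simp⟩
  -- there is a gap: w 1 is one
  have hn0 : ¬ P (w 1) := (hwgaps (w 1)).mpr ⟨1, le_rfl, hg1, rfl⟩
  set n0 : ℕ := w 1 with hn0def
  have hFpos : 0 ≤ F := by
    have hn0' : (n0 : ℤ) ∉ Tset a m := fun h => hn0 ((hbridge n0).mpr h)
    have : F - (n0 : ℤ) ∈ Tset a m := by
      by_contra h
      exact hn0' ((hF _).mpr h)
    have := tset_nonneg this
    have : (0:ℤ) ≤ (n0:ℤ) := by positivity
    omega
  set Fn : ℕ := F.toNat with hFndef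
  have hFn : (Fn : ℤ) = F := Int.toNat_of_nonneg hFpos
  have hsymN : ∀ n : ℕ, n ≤ Fn → (P n ↔ ¬ P (Fn - n)) := by
    intro n hn
    have hcast : ((Fn - n : ℕ) : ℤ) = F - (n : ℕ) := by omega
    rw [hbridge, hbridge, hcast]
    exact hF (n : ℤ)
  have hgapbound : ∀ n : ℕ, ¬ P n → n ≤ Fn := by
    intro n hn
    by_contra hlt
    push_neg at hlt
    have h1 : F - (n : ℤ) ∉ Tset a m := by
      intro h
      have := tset_nonneg h
      omega
    have := (hF (n : ℤ)).mpr h1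
    exact hn ((hbridge n).mpr this)
  set N : ℕ := Fn + 1 with hNdef
  set G : Finset ℕ := (Finset.range N).filter (fun n => ¬ P n) with hGdef
  set SF : Finset ℕ := (Finset.range N).filter P with hSFdef
  have hmemG : ∀ n : ℕ, n ∈ G ↔ ¬ P n := by
    intro n
    simp only [hGdef, Finset.mem_filter, Finset.mem_range]
    constructor
    · exact fun h => h.2
    · intro h
      exact ⟨by have := hgapbound n h; omega, h⟩
  have hmemSF : ∀ n : ℕ, n ∈ SF ↔ (n < N ∧ P n) := by
    intro n
    simp only [hSFdef, Finset.mem_filter, Finset.mem_range]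
  have hgG : g = G.card := by
    refine hgcard G ?_
    ext n
    rw [Finset.mem_coe, hmemG]
    rfl
  have hcardeq : SF.card = G.card := by
    refine Finset.card_bij' (fun n _ => Fn - n) (fun n _ => Fn - n) ?_ ?_ ?_ ?_
    · intro n hn
      rw [hmemSF] at hn
      show Fn - n ∈ G
      rw [hmemG]
      exact ((hsymN n (by omega)).mp hn.2)
    · intro n hn
      rw [hmemG] at hn
      have hb := hgapbound n hn
      show Fn - n ∈ SF
      rw [hmemSF]
      refine ⟨by omega, ?_⟩
      have := hsymN (Fn - n) (by omega)
      rw [show Fn - (Fn - n) = n by omega] at this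
      exact this.mpr hn
    · intro n hn
      rw [hmemSF] at hn
      show Fn - (Fn - n) = n
      omega
    · intro n hn
      rw [hmemG] at hn
      have := hgapbound n hn
      show Fn - (Fn - n) = n
      omega
  have hN2g : N = 2 * g := by
    have h2 := Finset.card_filter_add_card_filter_not (s := Finset.range N) (p := P)
    change SF.card + G.card = (Finset.range N).card at h2
    rw [Finset.card_range] at h2
    omega
  have hFn2g : Fn = 2 * g - 1 := by omega
  -- key facts in ℕ
  have K2 : ∀ n : ℕ, ¬ P n → n < 2 * g := fun n hn => by have := hgapbound n hn; omega
  have K1 : ∀ n : ℕ, n < 2 * g → (P n ↔ ¬ P (2 * g - 1 - n)) := by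
    intro n hn
    have := hsymN n (by omega)
    rw [show Fn - n = 2 * g - 1 - n by omega] at this
    exact this
  -- w enumerates G
  have hWset : ∀ n : ℕ, (∃ i, 1 ≤ i ∧ i ≤ g ∧ w i = n) ↔ n ∈ G := by
    intro n
    rw [hmemG, ← hwgaps n]
  -- w' enumerates SF
  have hw'le : ∀ i, 1 ≤ i → i ≤ g → w' i ≤ w' g := by
    intro i h1 h2
    exact hw'mono.monotoneOn (Set.mem_Icc.mpr ⟨h1, h2⟩) (Set.mem_Icc.mpr ⟨hg1, le_rfl⟩) h2
  have hAcard : (Finset.image w' (Finset.Icc 1 g)).card = g := by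
    rw [Finset.card_image_of_injOn (by rw [Finset.coe_Icc]; exact hw'mono.injOn), Nat.card_Icc]
    omega
  have hAB : Finset.image w' (Finset.Icc 1 g)
      = (Finset.range (w' g + 1)).filter P := by
    ext n
    simp only [Finset.mem_image, Finset.mem_Icc, Finset.mem_filter, Finset.mem_range]
    constructor
    · rintro ⟨i, ⟨hi1, hig⟩, rfl⟩
      exact ⟨by have := hw'le i hi1 hig; omega, hw'mem i hi1 hig⟩
    · rintro ⟨hn, hPn⟩
      by_contra hc
      push_neg at hc
      have := hw'small n hPn (fun i h1 h2 => fun he => hc i ⟨h1, h2⟩ he)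
      omega
  have hw'g : w' g < 2 * g := by
    by_contra hc
    push_neg at hc
    have hsub : SF ⊂ (Finset.range (w' g + 1)).filter P := by
      constructor
      · intro n hn
        rw [hmemSF] at hn
        simp only [Finset.mem_filter, Finset.mem_range]
        exact ⟨by omega, hn.2⟩
      · intro hss
        have hw'gB : w' g ∈ (Finset.range (w' g + 1)).filter P := by
          simp only [Finset.mem_filter, Finset.mem_range]
          exact ⟨by omega, hw'mem g hg1 le_rfl⟩
        have := hss hw'gB
        rw [hmemSF] at this
        omega
    have := Finset.card_lt_card hsub
    rw [hcardeq, ← hgG, ← hAB, hAcard] at this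
    omega
  have hASF : Finset.image w' (Finset.Icc 1 g) = SF := by
    apply Finset.eq_of_subset_of_card_le
    · intro n hn
      simp only [Finset.mem_image, Finset.mem_Icc] at hn
      obtain ⟨i, ⟨hi1, hig⟩, rfl⟩ := hn
      rw [hmemSF]
      exact ⟨by have := hw'le i hi1 hig; omega, hw'mem i hi1 hig⟩
    · rw [hAcard, hcardeq, ← hgG]
  have hW'set : ∀ n : ℕ, (∃ i, 1 ≤ i ∧ i ≤ g ∧ w' i = n) ↔ n ∈ SF := by
    intro n
    rw [← hASF]
    simp only [Finset.mem_image, Finset.mem_Icc]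
    constructor
    · rintro ⟨i, h1, h2, h3⟩; exact ⟨i, ⟨h1, h2⟩, h3⟩
    · rintro ⟨i, ⟨h1, h2⟩, h3⟩; exact ⟨i, h1, h2, h3⟩
  -- bounds on w' values
  have hw'lt : ∀ i, 1 ≤ i → i ≤ g → w' i < 2 * g := by
    intro i h1 h2
    have := hw'le i h1 h2
    omega
  refine ⟨?_, ?_, ?_⟩
  · -- disjointness
    ext n
    simp only [Set.mem_inter_iff, Set.mem_setOf_eq, Set.mem_empty_iff_false, iff_false]
    rintro ⟨hw1, hw2⟩
    have h1 : ¬ P n := (hwgaps n).mpr hw1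
    obtain ⟨i, hi1, hig, rfl⟩ := hw2
    exact h1 (hw'mem i hi1 hig)
  · -- union
    ext n
    simp only [Set.mem_union, Set.mem_setOf_eq, Set.mem_Iio]
    rw [hWset n, hW'set n, hmemG, hmemSF]
    constructor
    · rintro (h | h)
      · exact K2 n h
      · omega
    · intro hn
      by_cases hPn : P n
      · exact Or.inr ⟨by omega, hPn⟩
      · exact Or.inl hPn
  · -- duality
    set v : ℕ → ℕ := fun i => 2 * g - 1 - w' (g + 1 - i) with hv
    have key := enum_unique g w v hwmono ?_ ?_
    · intro i h1 h2
      exact (key i h1 h2).symm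
    · -- strict mono of the dual enumeration
      intro i hi j hj hij
      simp only [hv]
      simp only [Set.mem_Icc] at hi hj
      have hji : g + 1 - j < g + 1 - i := by omega
      have hmem1 : (g + 1 - j) ∈ Set.Icc 1 g := Set.mem_Icc.mpr ⟨by omega, by omega⟩
      have hmem2 : (g + 1 - i) ∈ Set.Icc 1 g := Set.mem_Icc.mpr ⟨by omega, by omega⟩
      have hlt := hw'mono hmem1 hmem2 hji
      have hub := hw'lt (g + 1 - i) (by omega) (by omega)
      omega
    · -- same image
      intro n
      simp only [hv]
      rw [hWset n, hmemG]
      constructor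
      · intro hn
        have hn2g := K2 n hn
        have hPs : P (2 * g - 1 - n) := by
          by_contra hc
          exact hn ((K1 n hn2g).mpr hc)
        have hsSF : (2 * g - 1 - n) ∈ SF := by
          rw [hmemSF]
          exact ⟨by omega, hPs⟩
        obtain ⟨j, hj1, hjg, hj⟩ := (hW'set _).mpr hsSF
        refine ⟨g + 1 - j, by omega, by omega, ?_⟩
        rw [show g + 1 - (g + 1 - j) = j by omega, hj]
        omega
      · rintro ⟨i, hi1, hig, rfl⟩
        have hmem : (g + 1 - i) ∈ Set.Icc 1 g := Set.mem_Icc.mpr ⟨by omega, by omega⟩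
        have hPs : P (w' (g + 1 - i)) := hw'mem _ (by omega) (by omega)
        have hslt : w' (g + 1 - i) < 2 * g := hw'lt _ (by omega) (by omega)
        exact (K1 _ hslt).mp hPs
end

section
/- Let a, b, c be positive integers with gcd(a, c) = 1 and gcd(b, a + c) = 1. Then the sequence (ab, bc, a + c) is telescopic (in particular gcd(ab, bc, a+c) = 1). -/
/-- For positive integers `a, b, c` with `gcd(a,c) = 1` and `gcd(b,a+c) = 1`,
the sequence `(ab, bc, a+c)` is telescopic; in particular
`gcd(ab, bc, a+c) = 1`. -/
theorem telescopic_example_abc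
    (a b c : ℕ) (ha : 0 < a) (hb : 0 < b) (hc : 0 < c)
    (hac : Nat.gcd a c = 1) (hbac : Nat.gcd b (a + c) = 1)
    (s : ℕ → ℕ)
    (hs : s 1 = a * b ∧ s 2 = b * c ∧ s 3 = a + c) :
    (Finset.Icc 1 3).gcd s = 1 ∧ Telescopic 3 s := by
  obtain ⟨h1, h2, h3⟩ := hs
  have hicc1 : Finset.Icc 1 1 = ({1} : Finset ℕ) := rfl
  have hicc2 : Finset.Icc 1 2 = ({1, 2} : Finset ℕ) := rfl
  have hicc3 : Finset.Icc 1 3 = ({1, 2, 3} : Finset ℕ) := rfl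
  have h12 : Nat.gcd (a * b) (b * c) = b := by
    rw [Nat.mul_comm a b, Nat.gcd_mul_left, hac, mul_one]
  have hd1 : dseq s 1 = a * b := by
    simp [dseq, hicc1, h1]
  have hd2 : dseq s 2 = b := by
    simp only [dseq, hicc2, Finset.gcd_insert, Finset.gcd_singleton, h1, h2]
    rw [normalize_eq]; exact h12
  have hd3 : (Finset.Icc 1 3).gcd s = 1 := by
    simp only [hicc3, Finset.gcd_insert, Finset.gcd_singleton, h1, h2, h3]
    show Nat.gcd (a * b) (Nat.gcd (b * c) (normalize (a + c))) = 1
    rw [normalize_eq, ← Nat.gcd_assoc, h12, hbac]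
  refine ⟨hd3, ?_⟩
  intro i hi2 hi3
  interval_cases i
  · refine ⟨fun _ => c, ?_⟩
    have : dseq s 2 = b := hd2
    simp [hicc1, hd1, hd2, h2, h1,
      Nat.mul_div_cancel_left c hb, Nat.div_self (Nat.mul_pos ha hb)]
  · refine ⟨fun _ => 1, ?_⟩
    have : dseq s 3 = 1 := hd3
    rw [this, Nat.div_one, h3]
    simp [hicc2, hd2, h1, h2, Nat.mul_div_cancel a hb,
      Nat.mul_div_cancel_left c hb, Nat.mul_div_cancel_left a hb, Nat.mul_comm a b]
end

section
/- Let a > b be positive integers with gcd(a, b) = 1, let m ≥ 2, and set a_i = a^{m−i} b^{i−1} for 1 ≤ i ≤ m. Then the sequence (a_1,…,a_m) is telescopic. -/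
/-- For coprime positive integers `a > b` and `m ≥ 2`, the sequence
`a_i = a^{m-i} b^{i-1}` (`1 ≤ i ≤ m`) is telescopic; in particular
`gcd(a_1, …, a_m) = 1`. -/
theorem telescopic_example_geometric
    (a b : ℕ) (hb : 0 < b) (hab : b < a) (h : Nat.gcd a b = 1)
    (m : ℕ) (hm : 2 ≤ m)
    (s : ℕ → ℕ)
    (hs : ∀ i, 1 ≤ i → i ≤ m → s i = a ^ (m - i) * b ^ (i - 1)) :
    (Finset.Icc 1 m).gcd s = 1 ∧ Telescopic m s := by
  have ha : 0 < a := lt_trans hb hab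
  have hd : ∀ i, 1 ≤ i → i ≤ m → dseq s i = a ^ (m - i) := by
    intro i hi
    induction i, hi using Nat.le_induction with
    | base =>
      intro him
      simp only [dseq, Finset.Icc_self, Finset.gcd_singleton]
      rw [hs 1 le_rfl him]
      simp
    | succ i hi ih =>
      intro him
      have him' : i ≤ m := by omega
      have hIcc : Finset.Icc 1 (i + 1) = insert (i + 1) (Finset.Icc 1 i) := by
        ext x; simp only [Finset.mem_Icc, Finset.mem_insert]; omega
      have e1 : m - i = (m - (i + 1)) + 1 := by omega
      rw [dseq, hIcc, Finset.gcd_insert]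
      have : (Finset.Icc 1 i).gcd s = a ^ (m - i) := ih him'
      rw [this, hs (i + 1) (by omega) him, e1, pow_succ]
      simp only [Nat.add_sub_cancel]
      have hco : Nat.gcd (b ^ i) a = 1 := Nat.Coprime.pow_left i (Nat.Coprime.symm h)
      have : Nat.gcd (a ^ (m - (i + 1)) * b ^ i) (a ^ (m - (i + 1)) * a)
          = a ^ (m - (i + 1)) := by
        rw [Nat.gcd_mul_left, hco, mul_one]
      exact this
  have hgcd1 : (Finset.Icc 1 m).gcd s = 1 := by
    have := hd m (by omega) le_rfl
    simpa [dseq] using this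
  refine ⟨hgcd1, ?_⟩
  intro i h2 him
  refine ⟨fun j => if j = i - 1 then b else 0, ?_⟩
  have hi1 : 1 ≤ i - 1 := by omega
  have hLHS : s i / dseq s i = b ^ (i - 1) := by
    rw [hs i (by omega) him, hd i (by omega) him,
      Nat.mul_div_cancel_left _ (pow_pos ha _)]
  rw [hLHS,
    Finset.sum_eq_single_of_mem (i - 1)
      (by simp only [Finset.mem_Icc]; omega)
      (by intro j hj hne; simp [hne])]
  simp only [if_pos rfl, if_true]
  rw [hs (i - 1) hi1 (by omega), hd (i - 1) hi1 (by omega),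
    Nat.mul_div_cancel_left _ (pow_pos ha _), ← pow_succ]
  congr 1
  omega
end

section
/- Let k ≥ 2 be an even integer and let S be the numerical semigroup generated by 2k, 2k+2, and 2k+1. Then the number of gaps of S (the cardinality of ℤ_{≥0} \ S) equals k². -/
/-- Sum of the first `n` odd numbers is `n²`. -/
lemma gaps_aux_odd_sum (n : ℕ) : ∑ i ∈ Finset.range n, (2*i+1) = n^2 := by
  induction n with
  | zero => simp
  | succ m ih => rw [Finset.sum_range_succ, ih]; ring

/-- `n` is representable iff it lies in some interval `[2kt, 2kt+2t]`. -/
lemma gaps_aux_repr (k n : ℕ) :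
    (∃ x y z : ℕ, n = (2*k)*x + (2*k+2)*y + (2*k+1)*z) ↔
    ∃ t, 2*k*t ≤ n ∧ n ≤ 2*k*t + 2*t := by
  constructor
  · rintro ⟨x,y,z,rfl⟩
    exact ⟨x+y+z, by nlinarith, by nlinarith⟩
  · rintro ⟨t,h1,h2⟩
    obtain ⟨r, hr⟩ := Nat.le.dest h1
    have hrle : r ≤ 2*t := by
      have := hr ▸ h2
      exact Nat.le_of_add_le_add_left this
    have hyz : r/2 + r%2 ≤ t := by omega
    refine ⟨t - (r/2 + r%2), r/2, r%2, ?_⟩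
    have hx : (t - (r/2 + r%2)) + (r/2 + r%2) = t := Nat.sub_add_cancel hyz
    have hz : 2*(r/2) + r%2 = r := by omega
    calc n = 2*k*t + r := hr.symm
    _ = 2*k*((t - (r/2 + r%2)) + (r/2 + r%2)) + (2*(r/2) + r%2) := by rw [hx, hz]
    _ = (2*k)*(t - (r/2 + r%2)) + (2*k+2)*(r/2) + (2*k+1)*(r%2) := by ring

/-- Gap characterization: `n` is a gap iff it lies strictly between consecutive
intervals, with quotient `q < k`. -/
lemma gaps_aux_gap (k n : ℕ) (hk : 1 ≤ k) :
    (¬ ∃ t, 2*k*t ≤ n ∧ n ≤ 2*k*t + 2*t) ↔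
    ∃ q, q < k ∧ 2*k*q + 2*q + 1 ≤ n ∧ n < 2*k*q + 2*k := by
  constructor
  · intro h
    set q := n / (2*k) with hq
    have hmod : 2*k*q + n % (2*k) = n := Nat.div_add_mod n (2*k)
    have hmlt : n % (2*k) < 2*k := Nat.mod_lt _ (by omega)
    have hle : 2*k*q ≤ n := Nat.le.intro hmod
    have hgt : 2*k*q + 2*q < n := by
      by_contra hc
      exact h ⟨q, hle, Nat.le_of_not_lt hc⟩
    have h2q : 2*q < n % (2*k) := by
      rw [← hmod] at hgt
      exact Nat.lt_of_add_lt_add_left hgt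
    refine ⟨q, by omega, hgt, ?_⟩
    rw [← hmod]
    exact Nat.add_lt_add_left hmlt _
  · rintro ⟨q, hqk, h1, h2⟩ ⟨t, ht1, ht2⟩
    rcases le_or_gt t q with hle | hlt
    · have hA : 2*k*t ≤ 2*k*q := Nat.mul_le_mul_left _ hle
      have hn : n ≤ 2*k*q + 2*q :=
        le_trans ht2 (Nat.add_le_add hA (by omega))
      exact Nat.lt_irrefl n (lt_of_le_of_lt hn (Nat.lt_of_succ_le h1))
    · have hA : 2*k*q + 2*k ≤ 2*k*t := by
        calc 2*k*q + 2*k = 2*k*(q+1) := by ring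
        _ ≤ 2*k*t := Nat.mul_le_mul_left _ hlt
      exact Nat.lt_irrefl n (lt_of_lt_of_le h2 (le_trans hA ht1))

/-- Cardinality of the union of the gap blocks. -/
lemma gaps_aux_card (k : ℕ) :
    ((Finset.range k).biUnion
      (fun q => Finset.Ico (2*k*q + 2*q + 1) (2*k*q + 2*k))).card = k^2 := by
  rw [Finset.card_biUnion]
  · have hcong : ∀ q ∈ Finset.range k,
        (Finset.Ico (2*k*q + 2*q + 1) (2*k*q + 2*k)).card = 2*(k-1-q)+1 := by
      intro q hq
      rw [Finset.mem_range] at hq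
      rw [Nat.card_Ico]
      have h1 : 2*k*q + 2*q + 1 = 2*k*q + (2*q + 1) := by ring
      rw [h1, Nat.add_sub_add_left]
      omega
    rw [Finset.sum_congr rfl hcong, Finset.sum_range_reflect (fun j => 2*j+1) k]
    exact gaps_aux_odd_sum k
  · intro q1 _ q2 _ hne
    rw [Function.onFun, Finset.disjoint_left]
    intro a ha1 ha2
    rw [Finset.mem_Ico] at ha1 ha2
    rcases Nat.lt_or_ge q1 q2 with h | h
    · have hAB : 2*k*q1 + 2*k ≤ 2*k*q2 := by
        calc 2*k*q1 + 2*k = 2*k*(q1+1) := by ring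
        _ ≤ 2*k*q2 := Nat.mul_le_mul_left _ h
      have hA : a < 2*k*q2 := lt_of_lt_of_le ha1.2 hAB
      have hB : 2*k*q2 ≤ a :=
        le_trans (Nat.le_add_right _ _) (le_trans (Nat.le_succ _) ha2.1)
      exact Nat.lt_irrefl a (lt_of_lt_of_le hA hB)
    · rcases Nat.lt_or_ge q2 q1 with h' | h'
      · have hAB : 2*k*q2 + 2*k ≤ 2*k*q1 := by
          calc 2*k*q2 + 2*k = 2*k*(q2+1) := by ring
          _ ≤ 2*k*q1 := Nat.mul_le_mul_left _ h'
        have hA : a < 2*k*q1 := lt_of_lt_of_le ha2.2 hAB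
        have hB : 2*k*q1 ≤ a :=
          le_trans (Nat.le_add_right _ _) (le_trans (Nat.le_succ _) ha1.1)
        exact Nat.lt_irrefl a (lt_of_lt_of_le hA hB)
      · exact hne (le_antisymm h' h)

/-- For an even integer `k ≥ 2`, the numerical semigroup generated by
`2k, 2k+2, 2k+1` has exactly `k²` gaps. -/
theorem gaps_count_2k_2k2_2k1
    (k : ℕ) (hk : 2 ≤ k) (hke : Even k) :
    Set.ncard {n : ℕ | ¬ ∃ x y z : ℕ,
        n = (2 * k) * x + (2 * k + 2) * y + (2 * k + 1) * z} = k ^ 2 := by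
  have hset : {n : ℕ | ¬ ∃ x y z : ℕ,
      n = (2 * k) * x + (2 * k + 2) * y + (2 * k + 1) * z}
      = ↑((Finset.range k).biUnion
          (fun q => Finset.Ico (2*k*q + 2*q + 1) (2*k*q + 2*k))) := by
    ext n
    simp only [Set.mem_setOf_eq, Finset.coe_biUnion, Finset.mem_coe,
      Finset.mem_biUnion, Finset.mem_range, Finset.mem_Ico, Set.mem_iUnion]
    rw [gaps_aux_repr, gaps_aux_gap k n (by omega)]
    constructor
    · rintro ⟨q, h1, h2, h3⟩; exact ⟨q, h1, h2, h3⟩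
    · rintro ⟨q, h1, h2, h3⟩; exact ⟨q, h1, h2, h3⟩
  rw [hset, Set.ncard_coe_finset]
  exact gaps_aux_card k
end
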